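/- arXiv:1901.03777 — 11 statements merged into one kernel-verified Lean document; each statement's English description precedes it below -/
import Mathlib

section
/- Let H be a real Hilbert space, N ≥ 2, and c(x₁,...,x_N) = Σ_{i<j}⟨x_i,x_j⟩. A set Γ ⊆ H^N is c-monotone if and only if for every nonempty proper subset K of {1,...,N}, the relation A_K = {(Σ_{i∈K} x_i, Σ_{i∉K} x_i) : x ∈ Γ} ⊆ H × H is a monotone relation. -/
open scoped RealInnerProductSpace BigOperators

noncomputable section

variable {H : Type*} [NormedAddCommGroup H] [InnerProductSpace ℝ H] [CompleteSpace H]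

/-- The multi-marginal cost `c(x₁,...,x_N) = ∑_{i<j} ⟪x_i, x_j⟫`. -/
def cost {N : ℕ} (x : Fin N → H) : ℝ :=
  ∑ i : Fin N, ∑ j : Fin N, if i < j then ⟪x i, x j⟫ else 0

lemma key_identity {N : ℕ} (K : Finset (Fin N)) (x y : Fin N → H) :
    cost x + cost y -
      (cost (fun i => if i ∈ K then x i else y i) +
       cost (fun i => if i ∈ K then y i else x i)) =
    ⟪(∑ i ∈ K, x i) - ∑ i ∈ K, y i, (∑ i ∈ Kᶜ, x i) - ∑ i ∈ Kᶜ, y i⟫ := by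
  set E : Fin N → Fin N → ℝ :=
    fun i j => if i ∈ K ∧ j ∉ K then ⟪x i - y i, x j - y j⟫ else 0 with hE
  -- RHS as double sum of E
  have hRHS : ⟪(∑ i ∈ K, x i) - ∑ i ∈ K, y i, (∑ i ∈ Kᶜ, x i) - ∑ i ∈ Kᶜ, y i⟫
      = ∑ i, ∑ j, E i j := by
    have h1 : ∀ i : Fin N, ∑ j, E i j =
        if i ∈ K then ⟪x i - y i, ∑ j ∈ Kᶜ, (x j - y j)⟫ else 0 := by
      intro i
      by_cases hi : i ∈ K
      · simp only [hE, hi, true_and, if_pos, inner_sum]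
        rw [← Finset.sum_filter]
        congr 1
        ext j
        simp [Finset.mem_compl]
      · simp [hE, hi]
    have h2 : ∑ i, ∑ j, E i j = ∑ i ∈ K, ⟪x i - y i, ∑ j ∈ Kᶜ, (x j - y j)⟫ := by
      rw [Finset.sum_congr rfl (fun i _ => h1 i), Finset.sum_ite_mem, Finset.univ_inter]
    rw [← Finset.sum_sub_distrib, ← Finset.sum_sub_distrib, sum_inner, h2]
  -- per (i,j) identity
  have hD : ∀ i j : Fin N,
      ⟪x i, x j⟫ + ⟪y i, y j⟫
        - ⟪(if i ∈ K then x i else y i), (if j ∈ K then x j else y j)⟫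
        - ⟪(if i ∈ K then y i else x i), (if j ∈ K then y j else x j)⟫
      = E i j + E j i := by
    intro i j
    have c1 := real_inner_comm (x j) (x i)
    have c2 := real_inner_comm (x j) (y i)
    have c3 := real_inner_comm (y j) (x i)
    have c4 := real_inner_comm (y j) (y i)
    by_cases hi : i ∈ K <;> by_cases hj : j ∈ K <;>
      simp only [hE, hi, hj, if_pos, if_neg, true_and, false_and, and_true, and_false,
        not_true, not_false_iff, if_true, if_false, inner_sub_left, inner_sub_right] <;>
      linarith
  -- LHS as double sum over i < j
  have hLHS : cost x + cost y -
      (cost (fun i => if i ∈ K then x i else y i) +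
       cost (fun i => if i ∈ K then y i else x i)) =
      ∑ i, ∑ j, if i < j then E i j + E j i else 0 := by
    simp only [cost, ← Finset.sum_add_distrib, ← Finset.sum_sub_distrib]
    refine Finset.sum_congr rfl fun i _ => Finset.sum_congr rfl fun j _ => ?_
    by_cases hij : i < j
    · simp only [hij, if_true]
      rw [← hD i j]; ring
    · simp [hij]
  -- exchange: ∑∑ E = ∑∑ (if i<j then E i j + E j i else 0)
  have hdiag : ∀ i : Fin N, E i i = 0 := by
    intro i; by_cases hi : i ∈ K <;> simp [hE, hi]
  have hsplit : ∑ i, ∑ j, E i j = ∑ i, ∑ j, if i < j then E i j + E j i else 0 := by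
    have htri : ∀ i j : Fin N, E i j =
        (if i < j then E i j else 0) + (if j < i then E i j else 0) +
        (if i = j then E i j else 0) := by
      intro i j
      rcases lt_trichotomy i j with h | h | h
      · simp [h, asymm h, h.ne]
      · simp [h]
      · simp [h, asymm h, (ne_of_gt h)]
    calc ∑ i, ∑ j, E i j
        = ∑ i, ∑ j, ((if i < j then E i j else 0) + (if j < i then E i j else 0) +
            (if i = j then E i j else 0)) := by
          exact Finset.sum_congr rfl fun i _ => Finset.sum_congr rfl fun j _ => htri i j
      _ = (∑ i, ∑ j, if i < j then E i j else 0) + (∑ i, ∑ j, if j < i then E i j else 0) +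
            (∑ i, ∑ j, if i = j then E i j else 0) := by
          simp [Finset.sum_add_distrib]
      _ = (∑ i, ∑ j, if i < j then E i j else 0) + (∑ i, ∑ j, if i < j then E j i else 0) + 0 := by
          congr 1
          · congr 1
            rw [Finset.sum_comm]
          · simp [Finset.sum_ite_eq, hdiag]
      _ = ∑ i, ∑ j, if i < j then E i j + E j i else 0 := by
          rw [add_zero, ← Finset.sum_add_distrib]
          refine Finset.sum_congr rfl fun i _ => ?_
          rw [← Finset.sum_add_distrib]
          refine Finset.sum_congr rfl fun j _ => ?_
          split_ifs <;> simp
  rw [hLHS, hRHS, hsplit]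

/-- A set `Γ ⊆ H^N` is `c`-monotone iff for every nonempty proper index set `K`,
the induced relation `A_K = {(∑_{i∈K} x_i, ∑_{i∉K} x_i) : x ∈ Γ}` is monotone. -/
theorem c_monotone_iff_AK_monotone {N : ℕ} (hN : 2 ≤ N) (Γ : Set (Fin N → H)) :
    (∀ x ∈ Γ, ∀ y ∈ Γ, ∀ K : Finset (Fin N), K.Nonempty → K ≠ Finset.univ →
      cost (fun i => if i ∈ K then x i else y i) +
        cost (fun i => if i ∈ K then y i else x i) ≤ cost x + cost y) ↔
    (∀ K : Finset (Fin N), K.Nonempty → K ≠ Finset.univ →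
      ∀ x ∈ Γ, ∀ y ∈ Γ,
        0 ≤ ⟪(∑ i ∈ K, x i) - ∑ i ∈ K, y i, (∑ i ∈ Kᶜ, x i) - ∑ i ∈ Kᶜ, y i⟫) := by
  constructor
  · intro h K hK hK' x hx y hy
    have := h x hx y hy K hK hK'
    have hid := key_identity K x y
    linarith
  · intro h x hx y hy K hK hK'
    have := h K hK hK' x hx y hy
    have hid := key_identity K x y
    linarith
end
end

section
/- Let Γ ⊆ H^N be a c-monotone set for c(x₁,...,x_N) = Σ_{i<j}⟨x_i,x_j⟩. If u, v ∈ Γ satisfy Σ_{i=1}^N (u_i - v_i) = 0 componentwise summed to zero (i.e., u - v lies in Δ^⊥ = {d ∈ H^N : Σ d_i = 0}), then u = v. -/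
open scoped RealInnerProductSpace BigOperators

noncomputable section

variable {H : Type*} [NormedAddCommGroup H] [InnerProductSpace ℝ H] [CompleteSpace H]

/-- `Γ ⊆ H^N` is `c`-monotone: for all `u, v ∈ Γ` and every nonempty proper index set `K`,
`⟪∑_{i∈K}(u_i - v_i), ∑_{i∉K}(u_i - v_i)⟫ ≥ 0`. -/
def CMono {N : ℕ} (Γ : Set (Fin N → H)) : Prop :=
  ∀ u ∈ Γ, ∀ v ∈ Γ, ∀ K : Finset (Fin N), K.Nonempty → K ≠ Finset.univ →
    0 ≤ ⟪∑ i ∈ K, (u i - v i), ∑ i ∈ Kᶜ, (u i - v i)⟫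

theorem eq_of_sub_mem_diagPerp {N : ℕ} (hN : 2 ≤ N) (Γ : Set (Fin N → H))
    (hΓ : CMono Γ) (u v : Fin N → H) (hu : u ∈ Γ) (hv : v ∈ Γ)
    (hsum : ∑ i, (u i - v i) = 0) : u = v := by
  funext i
  have hne : ({i} : Finset (Fin N)) ≠ Finset.univ := by
    intro h
    have hcard : Finset.card ({i} : Finset (Fin N)) = N := by simp [h]
    simp at hcard
    omega
  have h := hΓ u hu v hv {i} (Finset.singleton_nonempty i) hne
  have hc : ∑ j ∈ ({i} : Finset (Fin N))ᶜ, (u j - v j) = -(u i - v i) := by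
    have h2 := Finset.sum_compl_add_sum ({i} : Finset (Fin N)) (fun j => u j - v j)
    rw [hsum] at h2
    simp only [Finset.sum_singleton] at h2
    exact eq_neg_of_add_eq_zero_left h2
  rw [hc] at h
  simp only [Finset.sum_singleton] at h
  rw [inner_neg_right] at h
  have hle : ⟪u i - v i, u i - v i⟫ ≤ 0 := by linarith
  have h0 : u i - v i = 0 :=
    inner_self_eq_zero.mp (le_antisymm hle real_inner_self_nonneg)
  exact sub_eq_zero.mp h0
end
end

section
/- Let Γ ⊆ H^N be c-monotone, i.e., for all u, v ∈ Γ and all nonempty proper K ⊆ {1,...,N}, ⟨Σ_{i∈K}(u_i-v_i), Σ_{i∉K}(u_i-v_i)⟩ ≥ 0. Then the map from Γ to H given by x ↦ Σ_{i=1}^N x_i is injective, and hence Γ is parameterized as Γ = {(J₁(s),...,J_N(s)) : s ∈ S(Γ)} where S(x) = Σ x_i and J_i(S(x)) = x_i; moreover each J_i is firmly nonexpansive on S(Γ) and J₁ + ... + J_N = Id on S(Γ). -/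
open scoped RealInnerProductSpace BigOperators

noncomputable section

variable {H : Type*} [NormedAddCommGroup H] [InnerProductSpace ℝ H] [CompleteSpace H]

/-- The summation map `S(x) = ∑ᵢ xᵢ`. -/
def S {N : ℕ} (x : Fin N → H) : H := ∑ i, x i

lemma singleton_ne_univ {N : ℕ} (hN : 2 ≤ N) (i : Fin N) :
    ({i} : Finset (Fin N)) ≠ Finset.univ := by
  intro h
  have := congrArg Finset.card h
  simp [Finset.card_univ] at this
  omega

lemma key {N : ℕ} (hN : 2 ≤ N) {Γ : Set (Fin N → H)} (hΓ : CMono Γ)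
    {u v : Fin N → H} (hu : u ∈ Γ) (hv : v ∈ Γ) (i : Fin N) :
    0 ≤ ⟪u i - v i, (S u - S v) - (u i - v i)⟫ := by
  have h := hΓ u hu v hv {i} (Finset.singleton_nonempty i) (singleton_ne_univ hN i)
  have h1 : ∑ j ∈ ({i} : Finset (Fin N)), (u j - v j) = u i - v i :=
    Finset.sum_singleton _ _
  have h2 : ∑ j ∈ ({i} : Finset (Fin N))ᶜ, (u j - v j) = (S u - S v) - (u i - v i) := by
    have := Finset.sum_compl_add_sum ({i} : Finset (Fin N)) (fun j => u j - v j)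
    rw [h1] at this
    have hsum : ∑ j, (u j - v j) = S u - S v := by
      simp [S, Finset.sum_sub_distrib]
    rw [hsum] at this
    exact eq_sub_of_add_eq this
  rwa [h1, h2] at h

lemma inj {N : ℕ} (hN : 2 ≤ N) {Γ : Set (Fin N → H)} (hΓ : CMono Γ)
    {u v : Fin N → H} (hu : u ∈ Γ) (hv : v ∈ Γ) (h : S u = S v) : u = v := by
  funext i
  have hk := key hN hΓ hu hv i
  rw [h, sub_self, zero_sub, inner_neg_right, real_inner_self_eq_norm_sq] at hk
  have : ‖u i - v i‖ = 0 := by nlinarith [norm_nonneg (u i - v i)]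
  have := norm_eq_zero.mp this
  exact sub_eq_zero.mp this

theorem c_monotone_parametrization {N : ℕ} (hN : 2 ≤ N) (Γ : Set (Fin N → H))
    (hΓ : CMono Γ) :
    (∀ u ∈ Γ, ∀ v ∈ Γ, S u = S v → u = v) ∧
    ∃ J : Fin N → H → H,
      (∀ x ∈ Γ, ∀ i, J i (S x) = x i) ∧
      (Γ = {x : Fin N → H | ∃ s ∈ S '' Γ, x = fun i => J i s}) ∧
      (∀ i : Fin N, ∀ x ∈ Γ, ∀ y ∈ Γ,
        ‖J i (S x) - J i (S y)‖ ^ 2 + ‖(S x - J i (S x)) - (S y - J i (S y))‖ ^ 2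
          ≤ ‖S x - S y‖ ^ 2) ∧
      (∀ x ∈ Γ, ∑ i, J i (S x) = S x) := by
  refine ⟨fun u hu v hv h => inj hN hΓ hu hv h, ?_⟩
  classical
  refine ⟨fun i s => if h : ∃ x ∈ Γ, S x = s then h.choose i else 0, ?_, ?_, ?_, ?_⟩
  · intro x hx i
    have hex : ∃ y ∈ Γ, S y = S x := ⟨x, hx, rfl⟩
    simp only [dif_pos hex]
    obtain ⟨hy, hs⟩ := hex.choose_spec
    rw [inj hN hΓ hy hx hs]
  case refine_2 =>
    ext x
    constructor
    · intro hx
      refine ⟨S x, ⟨x, hx, rfl⟩, ?_⟩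
      funext i
      have hex : ∃ y ∈ Γ, S y = S x := ⟨x, hx, rfl⟩
      simp only [dif_pos hex]
      obtain ⟨hy, hs⟩ := hex.choose_spec
      rw [inj hN hΓ hy hx hs]
    · rintro ⟨s, ⟨y, hy, rfl⟩, rfl⟩
      have hex : ∃ z ∈ Γ, S z = S y := ⟨y, hy, rfl⟩
      have : (fun i => if h : ∃ z ∈ Γ, S z = S y then h.choose i else 0) = y := by
        funext i
        simp only [dif_pos hex]
        obtain ⟨hz, hs⟩ := hex.choose_spec
        rw [inj hN hΓ hz hy hs]
      rw [this]; exact hy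
  case refine_3 =>
    intro i x hx y hy
    have hex : ∃ z ∈ Γ, S z = S x := ⟨x, hx, rfl⟩
    have hey : ∃ z ∈ Γ, S z = S y := ⟨y, hy, rfl⟩
    simp only [dif_pos hex, dif_pos hey]
    obtain ⟨hz, hs⟩ := hex.choose_spec
    obtain ⟨hz', hs'⟩ := hey.choose_spec
    rw [inj hN hΓ hz hx hs, inj hN hΓ hz' hy hs']
    have hk := key hN hΓ hx hy i
    have hnorm := norm_add_sq_real (x i - y i) ((S x - S y) - (x i - y i))
    have heq : (x i - y i) + ((S x - S y) - (x i - y i)) = S x - S y := by abel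
    rw [heq] at hnorm
    have heq2 : (S x - x i) - (S y - y i) = (S x - S y) - (x i - y i) := by abel
    rw [heq2]
    nlinarith
  case refine_4 =>
    intro x hx
    have hex : ∃ z ∈ Γ, S z = S x := ⟨x, hx, rfl⟩
    simp only [dif_pos hex]
    obtain ⟨hz, hs⟩ := hex.choose_spec
    rw [inj hN hΓ hz hx hs]
    rfl
end
end

section
/- Let Γ ⊆ H^N be c-monotone. If there exists a nonempty proper subset K of {1,...,N} such that the relation A_K = {(Σ_{i∈K}x_i, Σ_{i∉K}x_i) : x ∈ Γ} is maximally monotone, then Γ + Δ^⊥ = H^N, where Δ^⊥ = {d ∈ H^N : Σ_{i=1}^N d_i = 0}. -/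
open scoped RealInnerProductSpace BigOperators

noncomputable section

variable {H : Type*} [NormedAddCommGroup H] [InnerProductSpace ℝ H] [CompleteSpace H]

/-- A relation `G ⊆ H × H` is monotone. -/
def MonoRel (G : Set (H × H)) : Prop :=
  ∀ p ∈ G, ∀ q ∈ G, 0 ≤ ⟪p.1 - q.1, p.2 - q.2⟫

/-- A relation `G ⊆ H × H` is maximally monotone: it is monotone and has no proper
monotone extension. -/
def MaxMonoRel (G : Set (H × H)) : Prop :=
  MonoRel G ∧ ∀ p : H × H, (∀ q ∈ G, 0 ≤ ⟪p.1 - q.1, p.2 - q.2⟫) → p ∈ G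

open Finset Filter

section AuxLemmas
variable {E : Type*} [NormedAddCommGroup E] [InnerProductSpace ℝ E]
variable {F : Type*} [NormedAddCommGroup F] [InnerProductSpace ℝ F]


section L1
variable {E : Type*} [NormedAddCommGroup E] [InnerProductSpace ℝ E]

lemma sumA {ι : Type*} [Fintype ι] (lam : ι → ℝ) (hlam1 : ∑ i, lam i = 1) (p : ι → E) :
    ∑ i, lam i * ‖p i - (∑ j, lam j • p j)‖^2
      = ∑ i, lam i * ‖p i‖^2 - ‖∑ j, lam j • p j‖^2 := by
  have hx : ∀ i, ‖p i - (∑ j, lam j • p j)‖^2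
      = ‖p i‖^2 - 2 * ⟪p i, (∑ j, lam j • p j)⟫ + ‖∑ j, lam j • p j‖^2 := fun i =>
    norm_sub_sq_real _ _
  have hsum : ∑ i, lam i * ⟪p i, (∑ j, lam j • p j)⟫ = ‖∑ j, lam j • p j‖^2 := by
    have h1 : ∀ i : ι, lam i * ⟪p i, (∑ j, lam j • p j)⟫
        = ⟪lam i • p i, (∑ j, lam j • p j)⟫ := fun i => (real_inner_smul_left _ _ _).symm
    rw [Finset.sum_congr rfl fun i _ => h1 i, ← sum_inner, real_inner_self_eq_norm_sq]
  calc ∑ i, lam i * ‖p i - (∑ j, lam j • p j)‖^2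
      = ∑ i, (lam i * ‖p i‖^2 - 2 * (lam i * ⟪p i, (∑ j, lam j • p j)⟫)
          + lam i * ‖∑ j, lam j • p j‖^2) := by
        refine Finset.sum_congr rfl fun i _ => ?_
        rw [hx i]; ring
    _ = ∑ i, lam i * ‖p i‖^2 - 2 * ∑ i, lam i * ⟪p i, (∑ j, lam j • p j)⟫
          + (∑ i, lam i) * ‖∑ j, lam j • p j‖^2 := by
        rw [Finset.sum_add_distrib, Finset.sum_sub_distrib, ← Finset.mul_sum, ← Finset.sum_mul]
    _ = _ := by rw [hsum, hlam1]; ring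

end L1

section L1b
variable {E : Type*} [NormedAddCommGroup E] [InnerProductSpace ℝ E]
variable {F : Type*} [NormedAddCommGroup F] [InnerProductSpace ℝ F]

lemma sumB {ι : Type*} [Fintype ι] (lam : ι → ℝ) (hlam1 : ∑ i, lam i = 1) (p : ι → E) :
    ∑ i, ∑ j, lam i * lam j * ‖p i - p j‖^2
      = 2 * (∑ i, lam i * ‖p i‖^2 - ‖∑ j, lam j • p j‖^2) := by
  have hin : ⟪∑ i, lam i • p i, ∑ j, lam j • p j⟫ = ∑ i, ∑ j, lam i * lam j * ⟪p i, p j⟫ := by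
    rw [sum_inner]
    refine Finset.sum_congr rfl fun i _ => ?_
    rw [real_inner_smul_left, inner_sum, Finset.mul_sum]
    refine Finset.sum_congr rfl fun j _ => ?_
    rw [real_inner_smul_right]; ring
  have hnorm : ‖∑ j, lam j • p j‖^2 = ∑ i, ∑ j, lam i * lam j * ⟪p i, p j⟫ := by
    rw [← real_inner_self_eq_norm_sq, hin]
  have hA : ∑ i, ∑ j, lam i * lam j * ‖p i‖^2 = ∑ i, lam i * ‖p i‖^2 := by
    have : ∀ i : ι, ∑ j, lam i * lam j * ‖p i‖^2 = (lam i * ‖p i‖^2) * ∑ j, lam j := by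
      intro i; rw [Finset.mul_sum]; refine Finset.sum_congr rfl fun j _ => ?_; ring
    rw [Finset.sum_congr rfl fun i _ => this i]
    refine Finset.sum_congr rfl fun i _ => ?_; rw [hlam1, mul_one]
  have hC : ∑ i, ∑ j, lam i * lam j * ‖p j‖^2 = ∑ i, lam i * ‖p i‖^2 := by
    rw [Finset.sum_comm]
    have : ∀ j : ι, ∑ i, lam i * lam j * ‖p j‖^2 = (lam j * ‖p j‖^2) * ∑ i, lam i := by
      intro j; rw [Finset.mul_sum]; refine Finset.sum_congr rfl fun i _ => ?_; ring
    rw [Finset.sum_congr rfl fun j _ => this j]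
    refine Finset.sum_congr rfl fun j _ => ?_; rw [hlam1, mul_one]
  calc ∑ i, ∑ j, lam i * lam j * ‖p i - p j‖^2
      = ∑ i, (∑ j, lam i * lam j * ‖p i‖^2 - ∑ j, 2 * (lam i * lam j * ⟪p i, p j⟫)
          + ∑ j, lam i * lam j * ‖p j‖^2) := by
        refine Finset.sum_congr rfl fun i _ => ?_
        rw [← Finset.sum_sub_distrib, ← Finset.sum_add_distrib]
        refine Finset.sum_congr rfl fun j _ => ?_
        rw [norm_sub_sq_real]; ring
    _ = ∑ i, ∑ j, lam i * lam j * ‖p i‖^2 - 2 * ∑ i, ∑ j, lam i * lam j * ⟪p i, p j⟫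
          + ∑ i, ∑ j, lam i * lam j * ‖p j‖^2 := by
        rw [Finset.sum_add_distrib, Finset.sum_sub_distrib]
        congr 1; congr 1
        rw [Finset.mul_sum]
        exact Finset.sum_congr rfl fun i _ => (Finset.mul_sum _ _ _).symm
    _ = _ := by rw [hA, hC, ← hnorm]; ring

lemma keyIneq {ι : Type*} [Fintype ι] (lam : ι → ℝ) (h0 : ∀ i, 0 ≤ lam i)
    (h1 : ∑ i, lam i = 1) (p : ι → E) (q : ι → F)
    (h : ∀ i j, ‖p i - p j‖ ≤ ‖q i - q j‖) :
    ∑ i, lam i * ‖p i - ∑ j, lam j • p j‖^2 ≤ ∑ i, lam i * ‖q i - ∑ j, lam j • q j‖^2 := by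
  have hd : ∑ i, ∑ j, lam i * lam j * ‖p i - p j‖^2
      ≤ ∑ i, ∑ j, lam i * lam j * ‖q i - q j‖^2 := by
    refine Finset.sum_le_sum fun i _ => Finset.sum_le_sum fun j _ => ?_
    exact mul_le_mul_of_nonneg_left (pow_le_pow_left₀ (norm_nonneg _) (h i j) 2)
      (mul_nonneg (h0 i) (h0 j))
  have hp := sumB lam h1 p
  have hq := sumB lam h1 q
  have hap := sumA lam h1 p
  have haq := sumA lam h1 q
  linarith
end L1b


variable [FiniteDimensional ℝ E] in
set_option maxHeartbeats 1000000 in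
lemma finite_balls_findim {ι : Type*} (S : Finset ι) (hS : S.Nonempty) (c : ι → E) (w : ι → F)
    (hcw : ∀ i ∈ S, ∀ j ∈ S, ‖c i - c j‖ ≤ ‖w i - w j‖) :
    ∃ x : E, ∀ i ∈ S, ‖x - c i‖ ≤ ‖w i‖ := by
  classical
  set g : ι → E → ℝ := fun i x => ‖x - c i‖^2 - ‖w i‖^2 with hg
  set f : E → ℝ := fun x => S.sup' hS (fun i => g i x) with hf
  have hScopy := hS
  obtain ⟨i₀, hi₀⟩ := hScopy
  -- continuity
  have hgc : ∀ i ∈ S, Continuous (g i) := fun i _ =>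
    (((continuous_id.sub continuous_const).norm.pow 2).sub continuous_const)
  have hfc : Continuous f := Continuous.finset_sup'_apply hS hgc
  -- coercivity
  have hcoer : Tendsto f (cocompact E) atTop := by
    have h2 : Tendsto (fun x : E => ‖x - c i₀‖) (cocompact E) atTop := by
      refine tendsto_atTop_mono (fun x => norm_sub_norm_le x (c i₀)) ?_
      simpa [sub_eq_add_neg] using
        tendsto_atTop_add_const_right (cocompact E) (-‖c i₀‖) tendsto_norm_cocompact_atTop
    have h3 : Tendsto (fun x : E => g i₀ x) (cocompact E) atTop :=
      tendsto_atTop_add_const_right _ (-‖w i₀‖^2)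
        (((tendsto_pow_atTop (two_ne_zero)).comp h2).congr (fun x => rfl)) |>.congr
        (fun x => by simp [hg, sub_eq_add_neg])
    exact tendsto_atTop_mono (fun x => Finset.le_sup' (fun i => g i x) hi₀) h3
  obtain ⟨x0, hx0⟩ := hfc.exists_forall_le hcoer
  set m := f x0 with hm
  rcases le_or_gt m 0 with hm0 | hm0
  · refine ⟨x0, fun i hi => ?_⟩
    have h1 : g i x0 ≤ m := Finset.le_sup' (fun i => g i x0) hi
    have h2 : ‖x0 - c i‖^2 ≤ ‖w i‖^2 := by simp only [hg] at h1; linarith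
    nlinarith [norm_nonneg (x0 - c i), norm_nonneg (w i)]
  · exfalso
    set I : Finset ι := S.filter (fun i => g i x0 = m) with hI
    have hIne : I.Nonempty := by
      obtain ⟨i, hiS, hieq⟩ := Finset.exists_mem_eq_sup' hS (fun i => g i x0)
      exact ⟨i, Finset.mem_filter.2 ⟨hiS, hieq.symm⟩⟩
    have hIS : ∀ i ∈ I, i ∈ S := fun i hi => (Finset.mem_filter.1 hi).1
    have hIg : ∀ i ∈ I, ‖x0 - c i‖^2 = ‖w i‖^2 + m := by
      intro i hi
      have := (Finset.mem_filter.1 hi).2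
      simp only [hg] at this; linarith
    -- x0 is in the convex hull of active centers
    have hhull : x0 ∈ convexHull ℝ (↑(I.image c) : Set E) := by
      by_contra hx0n
      obtain ⟨φ, u, hφx, hφs⟩ := geometric_hahn_banach_point_closed
        (convex_convexHull ℝ _)
        ((Set.Finite.isCompact_convexHull ℝ (I.image c).finite_toSet).isClosed) hx0n
      set d : E := (InnerProductSpace.toDual ℝ E).symm φ with hd
      have hdy : ∀ y : E, ⟪d, y⟫ = φ y := fun y => InnerProductSpace.toDual_symm_apply
      have hneg : ∀ i ∈ I, ⟪x0 - c i, d⟫ < 0 := by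
        intro i hi
        have hci : u < φ (c i) := hφs (c i) (subset_convexHull ℝ _
          (by exact_mod_cast Finset.mem_image_of_mem c hi))
        have : ⟪d, x0 - c i⟫ = φ x0 - φ (c i) := by rw [hdy, map_sub]
        rw [real_inner_comm]; rw [this]; linarith
      have hdne : d ≠ 0 := by
        obtain ⟨i, hi⟩ := hIne
        intro h0
        have := hneg i hi
        rw [h0, inner_zero_right] at this
        exact lt_irrefl _ this
      have hdpos : 0 < ‖d‖ := norm_pos_iff.2 hdne
      set α := I.inf' hIne (fun i => -⟪x0 - c i, d⟫) with hα
      have hαpos : 0 < α := by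
        rw [hα, Finset.lt_inf'_iff]
        intro i hi; linarith [hneg i hi]
      set B := S.sup' hS (fun i => ‖x0 - c i‖) with hB
      have hBnn : 0 ≤ B := le_trans (norm_nonneg (x0 - c i₀)) (Finset.le_sup' (fun i => ‖x0 - c i‖) hi₀)
      set J : Finset ι := S.filter (fun i => ¬ (g i x0 = m)) with hJ
      have hJlt : ∀ i ∈ J, g i x0 < m := by
        intro i hi
        obtain ⟨hiS, hine⟩ := Finset.mem_filter.1 hi
        exact lt_of_le_of_ne (Finset.le_sup' (fun i => g i x0) hiS) hine
      set γ := if hJne : J.Nonempty then J.inf' hJne (fun i => m - g i x0) else 1 with hγ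
      have hγpos : 0 < γ := by
        rw [hγ]
        split_ifs with hJne
        · rw [Finset.lt_inf'_iff]
          intro i hi; linarith [hJlt i hi]
        · exact one_pos
      set t := min (min (α/‖d‖^2) (γ/(2*(2*B*‖d‖ + ‖d‖^2)))) 1 with ht
      have hden : 0 < 2*B*‖d‖ + ‖d‖^2 := by positivity
      have htpos : 0 < t := lt_min (lt_min (by positivity) (by positivity)) one_pos
      have ht1 : t ≤ 1 := min_le_right _ _
      have htα : t ≤ α/‖d‖^2 := le_trans (min_le_left _ _) (min_le_left _ _)
      have htγ : t ≤ γ/(2*(2*B*‖d‖ + ‖d‖^2)) := le_trans (min_le_left _ _) (min_le_right _ _)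
      -- each term at x0 + t • d
      have hexp : ∀ i, g i (x0 + t • d) = g i x0 + 2*t*⟪x0 - c i, d⟫ + t^2*‖d‖^2 := by
        intro i
        have : x0 + t • d - c i = (x0 - c i) + t • d := by abel
        simp only [hg, this, norm_add_sq_real, real_inner_smul_right, norm_smul,
          Real.norm_eq_abs, abs_of_pos htpos, mul_pow]
        ring
      have hlt : f (x0 + t • d) < m := by
        rw [hf, Finset.sup'_lt_iff]
        intro i hiS
        rw [hexp i]
        by_cases hiI : i ∈ I
        · have h1 : g i x0 = m := (Finset.mem_filter.1 hiI).2
          have h2 : ⟪x0 - c i, d⟫ ≤ -α := by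
            have := Finset.inf'_le (fun i => -⟪x0 - c i, d⟫) hiI
            linarith
          have h5 : (0:ℝ) < ‖d‖^2 := by positivity
          have h3 : t * ‖d‖^2 ≤ α := by
            calc t * ‖d‖^2 ≤ (α/‖d‖^2) * ‖d‖^2 := by nlinarith
              _ = α := by field_simp
          rw [h1]
          nlinarith [htpos, hαpos]
        · have hiJ : i ∈ J := Finset.mem_filter.2
            ⟨hiS, fun hc => hiI (Finset.mem_filter.2 ⟨hiS, hc⟩)⟩
          have hJne : J.Nonempty := ⟨i, hiJ⟩
          have hγle : γ ≤ m - g i x0 := by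
            rw [hγ, dif_pos hJne]
            exact Finset.inf'_le _ hiJ
          have hB1 : ‖x0 - c i‖ ≤ B := Finset.le_sup' (fun i => ‖x0 - c i‖) hiS
          have hip : ⟪x0 - c i, d⟫ ≤ B * ‖d‖ :=
            le_trans (real_inner_le_norm _ _) (by nlinarith [norm_nonneg d])
          have ht3 : t*(2*B*‖d‖ + ‖d‖^2) ≤ γ/2 := by
            calc t*(2*B*‖d‖ + ‖d‖^2) ≤ (γ/(2*(2*B*‖d‖ + ‖d‖^2)))*(2*B*‖d‖ + ‖d‖^2) := by
                  nlinarith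
              _ = γ/2 := by field_simp
          have e1 : 2*t*⟪x0 - c i, d⟫ ≤ 2*t*(B*‖d‖) := by
            have h2t : (0:ℝ) ≤ 2*t := by linarith
            exact mul_le_mul_of_nonneg_left hip h2t
          have e2 : t^2*‖d‖^2 ≤ t*‖d‖^2 := by
            have ht2 : t^2 ≤ t := by nlinarith
            exact mul_le_mul_of_nonneg_right ht2 (sq_nonneg _)
          have e3 : 2*t*(B*‖d‖) + t*‖d‖^2 = t*(2*B*‖d‖ + ‖d‖^2) := by ring
          linarith
      have := hx0 (x0 + t • d)
      linarith
    -- convex combination contradiction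
    rw [mem_convexHull_iff_exists_fintype] at hhull
    obtain ⟨κ, hκ, lam, z, hlam0, hlam1, hz, hzx⟩ := hhull
    have hchoice : ∀ k : κ, ∃ i, i ∈ I ∧ c i = z k := by
      intro k
      have := hz k
      simp only [Finset.coe_image, Set.mem_image, Finset.mem_coe] at this
      obtain ⟨i, hi, hci⟩ := this
      exact ⟨i, hi, hci⟩
    choose idx hidxI hidxc using hchoice
    set p : κ → E := fun k => c (idx k) with hp
    set q : κ → F := fun k => w (idx k) with hq
    have hpz : p = z := funext fun k => hidxc k
    have hpq : ∀ k l, ‖p k - p l‖ ≤ ‖q k - q l‖ := fun k l =>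
      hcw _ (hIS _ (hidxI k)) _ (hIS _ (hidxI l))
    have hkey := keyIneq lam hlam0 hlam1 p q hpq
    have hsumq := sumA lam hlam1 q
    have hxbar : ∑ j, lam j • p j = x0 := by rw [hpz]; exact hzx
    have hLHS : ∑ k, lam k * ‖p k - ∑ j, lam j • p j‖^2 = ∑ k, lam k * ‖q k‖^2 + m := by
      rw [hxbar]
      have heval : ∀ k, ‖p k - x0‖^2 = ‖q k‖^2 + m := by
        intro k
        rw [norm_sub_rev]
        exact hIg _ (hidxI k)
      calc ∑ k, lam k * ‖p k - x0‖^2 = ∑ k, (lam k * ‖q k‖^2 + lam k * m) := by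
            refine Finset.sum_congr rfl fun k _ => ?_
            rw [heval k]; ring
        _ = ∑ k, lam k * ‖q k‖^2 + (∑ k, lam k) * m := by
            rw [Finset.sum_add_distrib, Finset.sum_mul]
        _ = _ := by rw [hlam1, one_mul]
    have hnn : 0 ≤ ‖∑ j, lam j • q j‖^2 := by positivity
    linarith

end AuxLemmas

section AuxHilbert

lemma norm_sub_le_norm_add_of_inner_nonneg {u v : H} (h : 0 ≤ ⟪u, v⟫) :
    ‖u - v‖ ≤ ‖u + v‖ := by
  have h1 : ‖u - v‖^2 ≤ ‖u + v‖^2 := by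
    rw [norm_add_sq_real, norm_sub_sq_real]; linarith
  nlinarith [norm_nonneg (u - v), norm_nonneg (u + v)]

lemma inner_nonneg_of_norm_sub_le_norm_add {u v : H} (h : ‖u - v‖ ≤ ‖u + v‖) :
    0 ≤ ⟪u, v⟫ := by
  have h1 : ‖u - v‖^2 ≤ ‖u + v‖^2 := by
    nlinarith [norm_nonneg (u - v), norm_nonneg (u + v)]
  rw [norm_add_sq_real, norm_sub_sq_real] at h1
  linarith

lemma finite_balls {ι : Type*} (S : Finset ι) (c w : ι → H)
    (hcw : ∀ i ∈ S, ∀ j ∈ S, ‖c i - c j‖ ≤ ‖w i - w j‖) :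
    ∃ x : H, ∀ i ∈ S, ‖x - c i‖ ≤ ‖w i‖ := by
  classical
  rcases S.eq_empty_or_nonempty with rfl | hS
  · exact ⟨0, by simp⟩
  set V := Submodule.span ℝ (↑(S.image c) : Set H) with hV
  have hfd : FiniteDimensional ℝ V :=
    FiniteDimensional.span_of_finite ℝ (S.image c).finite_toSet
  have hmem : ∀ i ∈ S, c i ∈ V := fun i hi =>
    Submodule.subset_span (by exact_mod_cast Finset.mem_image_of_mem c hi)
  set c' : ι → V := fun i => if h : i ∈ S then (⟨c i, hmem i h⟩ : V) else 0 with hc'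
  have hc'eq : ∀ i ∈ S, (c' i : H) = c i := fun i hi => by simp [hc', dif_pos hi]
  obtain ⟨x, hx⟩ := finite_balls_findim S hS c' w (fun i hi j hj => by
    have h1 : ((c' i - c' j : V) : H) = c i - c j := by
      push_cast [hc'eq i hi, hc'eq j hj]; ring_nf
    have h2 : ‖c' i - c' j‖ = ‖c i - c j‖ := by rw [← h1]; rfl
    rw [h2]; exact hcw i hi j hj)
  refine ⟨(x : H), fun i hi => ?_⟩
  have h1 : ((x - c' i : V) : H) = (x : H) - c i := by push_cast [hc'eq i hi]; ring_nf
  have h2 : ‖(x : H) - c i‖ = ‖x - c' i‖ := by rw [← h1]; rfl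
  rw [h2]; exact hx i hi

lemma balls_inter [CompleteSpace H] {ι : Type*} [Nonempty ι] (c w : ι → H)
    (hcw : ∀ i j, ‖c i - c j‖ ≤ ‖w i - w j‖) :
    ∃ x : H, ∀ i, ‖x - c i‖ ≤ ‖w i‖ := by
  classical
  set C : Finset ι → Set H := fun S => ⋂ i ∈ S, Metric.closedBall (c i) ‖w i‖ with hC
  have hCconv : ∀ S, Convex ℝ (C S) :=
    fun S => convex_iInter fun i => convex_iInter fun _ => convex_closedBall _ _
  have hCclosed : ∀ S, IsClosed (C S) :=
    fun S => isClosed_biInter fun i _ => Metric.isClosed_closedBall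
  have hCne : ∀ S, (C S).Nonempty := by
    intro S
    obtain ⟨x, hx⟩ := finite_balls S c w (fun i _ j _ => hcw i j)
    exact ⟨x, Set.mem_iInter₂.2 fun i hi => Metric.mem_closedBall.2
      (by rw [dist_eq_norm]; exact hx i hi)⟩
  have hCanti : ∀ S T : Finset ι, S ⊆ T → C T ⊆ C S := fun S T hST x hx =>
    Set.mem_iInter₂.2 fun i hi => Set.mem_iInter₂.1 hx i (hST hi)
  have hproj : ∀ S : Finset ι, ∃ v ∈ C S, ∀ z ∈ C S, ‖v‖ ≤ ‖z‖ := by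
    intro S
    obtain ⟨v, hv, hveq⟩ := exists_norm_eq_iInf_of_complete_convex (hCne S)
      ((hCclosed S).isComplete) (hCconv S) 0
    refine ⟨v, hv, fun z hz => ?_⟩
    have h1 : ‖(0:H) - v‖ ≤ ‖(0:H) - z‖ := by
      rw [hveq]
      exact ciInf_le ⟨0, Set.forall_mem_range.2 fun _ => norm_nonneg _⟩ (⟨z, hz⟩ : C S)
    simpa using h1
  choose v hvmem hvmin using hproj
  have hmono : ∀ S T : Finset ι, S ⊆ T → ‖v S‖ ≤ ‖v T‖ :=
    fun S T hST => hvmin S (v T) (hCanti S T hST (hvmem T))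
  have hmid : ∀ S T : Finset ι, S ⊆ T → ‖v S - v T‖^2 ≤ 2*(‖v T‖^2 - ‖v S‖^2) := by
    intro S T hST
    have hvT : v T ∈ C S := hCanti S T hST (hvmem T)
    have hmidmem : (1/2 : ℝ) • v S + (1/2 : ℝ) • v T ∈ C S :=
      (hCconv S) (hvmem S) hvT (by norm_num) (by norm_num) (by norm_num)
    have h1 : ‖v S‖ ≤ ‖(1/2:ℝ) • v S + (1/2:ℝ) • v T‖ := hvmin S _ hmidmem
    have h2 : ‖(1/2:ℝ) • v S + (1/2:ℝ) • v T‖ = (1/2) * ‖v S + v T‖ := by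
      rw [← smul_add, norm_smul, Real.norm_eq_abs]; norm_num
    have hpar : ‖v S - v T‖^2 + ‖v S + v T‖^2 = 2*‖v S‖^2 + 2*‖v T‖^2 := by
      rw [norm_add_sq_real, norm_sub_sq_real]; ring
    rw [h2] at h1
    nlinarith [norm_nonneg (v S + v T), norm_nonneg (v S)]
  -- bound
  set i₀ : ι := Classical.arbitrary ι with hi₀
  set M : ℝ := ‖c i₀‖ + ‖w i₀‖ with hM
  have hMv : ∀ S, ‖v S‖ ≤ M := by
    intro S
    have h1 : ‖v S‖ ≤ ‖v (S ∪ {i₀})‖ := hmono _ _ Finset.subset_union_left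
    have h2 : v (S ∪ {i₀}) ∈ Metric.closedBall (c i₀) ‖w i₀‖ :=
      Set.mem_iInter₂.1 (hvmem (S ∪ {i₀})) i₀ (Finset.mem_union_right _ (Finset.mem_singleton_self i₀))
    rw [Metric.mem_closedBall, dist_eq_norm] at h2
    calc ‖v S‖ ≤ ‖v (S ∪ {i₀})‖ := h1
      _ ≤ ‖v (S ∪ {i₀}) - c i₀‖ + ‖c i₀‖ := by
          have := norm_sub_norm_le (v (S ∪ {i₀})) (c i₀); linarith
      _ ≤ M := by rw [hM]; linarith
  have hM0 : 0 ≤ M := le_trans (norm_nonneg _) (hMv ∅)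
  set d : ℝ := ⨆ S : Finset ι, ‖v S‖ with hdd
  have hbdd : BddAbove (Set.range fun S : Finset ι => ‖v S‖) :=
    ⟨M, Set.forall_mem_range.2 hMv⟩
  have hvd : ∀ S, ‖v S‖ ≤ d := fun S => le_ciSup hbdd S
  have hdM : d ≤ M := ciSup_le hMv
  have hd0 : 0 ≤ d := le_trans (norm_nonneg _) (hvd ∅)
  -- approximating sequence
  have hex : ∀ n : ℕ, ∃ S : Finset ι, d - 1/(n+1) < ‖v S‖ := by
    intro n
    have h1 : d - 1/((n:ℝ)+1) < d := by
      have : (0:ℝ) < 1/((n:ℝ)+1) := by positivity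
      linarith
    obtain ⟨S, hS⟩ := exists_lt_of_lt_ciSup h1
    exact ⟨S, hS⟩
  choose A hA using hex
  set T : ℕ → Finset ι := fun n => (Finset.range (n+1)).biUnion A with hT
  have hTmono : ∀ m n : ℕ, m ≤ n → T m ⊆ T n := by
    intro m n hmn
    exact Finset.biUnion_subset_biUnion_of_subset_left _
      (Finset.range_subset_range.2 (by omega))
  have hAT : ∀ n, A n ⊆ T n := fun n =>
    Finset.subset_biUnion_of_mem A (Finset.mem_range.2 (Nat.lt_succ_self n))
  have hvTlow : ∀ n : ℕ, d - 1/(n+1) < ‖v (T n)‖ := fun n =>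
    lt_of_lt_of_le (hA n) (hmono _ _ (hAT n))
  -- key quantitative bound
  have hquant : ∀ (S : Finset ι) (n : ℕ), T n ⊆ S → ‖v (T n) - v S‖^2 ≤ 4*M/(n+1) := by
    intro S n hsub
    have h1 := hmid (T n) S hsub
    have h2 : ‖v S‖ ≤ d := hvd S
    have h3 : d - 1/(n+1) < ‖v (T n)‖ := hvTlow n
    have h4 : ‖v (T n)‖ ≤ d := hvd _
    have h5 : (0:ℝ) < 1/((n:ℝ)+1) := by positivity
    have h6 : ‖v S‖^2 - ‖v (T n)‖^2 ≤ (d - ‖v (T n)‖) * (d + ‖v (T n)‖) := by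
      nlinarith [norm_nonneg (v S), norm_nonneg (v (T n))]
    have h7 : (d - ‖v (T n)‖) * (d + ‖v (T n)‖) ≤ (1/(n+1)) * (2*M) := by
      have ha : d - ‖v (T n)‖ ≤ 1/(n+1) := by linarith
      have hb : d + ‖v (T n)‖ ≤ 2*M := by linarith [hMv (T n), hdM]
      have hc' : 0 ≤ d + ‖v (T n)‖ := by positivity
      nlinarith
    calc ‖v (T n) - v S‖^2 ≤ 2*(‖v S‖^2 - ‖v (T n)‖^2) := h1
      _ ≤ 2*((1/(n+1)) * (2*M)) := by nlinarith
      _ = 4*M/(n+1) := by ring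
  -- Cauchy
  have hcau : CauchySeq (fun n => v (T n)) := by
    rw [Metric.cauchySeq_iff']
    intro ε hε
    obtain ⟨N, hN⟩ := exists_nat_gt (4*M/ε^2)
    refine ⟨N, fun n hn => ?_⟩
    have h1 : ‖v (T N) - v (T n)‖^2 ≤ 4*M/(N+1) := hquant (T n) N (hTmono N n hn)
    have h2 : 4*M/((N:ℝ)+1) < ε^2 := by
      rw [div_lt_iff₀ (by positivity)]
      rw [div_lt_iff₀ (by positivity)] at hN
      nlinarith
    have h3 : dist (v (T n)) (v (T N)) = ‖v (T N) - v (T n)‖ := by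
      rw [dist_eq_norm, norm_sub_rev]
    rw [h3]
    nlinarith [norm_nonneg (v (T N) - v (T n))]
  obtain ⟨xbar, hxbar⟩ := cauchySeq_tendsto_of_complete hcau
  -- conclusion
  refine ⟨xbar, fun i => ?_⟩
  have hdistzero : Tendsto (fun n : ℕ => Real.sqrt (4*M/(n+1))) atTop (nhds 0) := by
    have h0 : Tendsto (fun n : ℕ => 4*M/((n:ℝ)+1)) atTop (nhds 0) := by
      have := tendsto_one_div_add_atTop_nhds_zero_nat (𝕜 := ℝ)
      have h2 := this.const_mul (4*M)
      simpa [mul_one_div, div_eq_mul_inv] using h2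
    have := (Real.continuous_sqrt.tendsto 0).comp h0
    simpa [Function.comp_def] using this
  have hyi : Tendsto (fun n => v (T n ∪ {i})) atTop (nhds xbar) := by
    have hb : ∀ n : ℕ, dist (v (T n ∪ {i})) (v (T n)) ≤ Real.sqrt (4*M/(n+1)) := by
      intro n
      have h1 : ‖v (T n) - v (T n ∪ {i})‖^2 ≤ 4*M/(n+1) :=
        hquant (T n ∪ {i}) n Finset.subset_union_left
      rw [dist_eq_norm, norm_sub_rev]
      exact Real.le_sqrt_of_sq_le h1
    have hd0' : Tendsto (fun n : ℕ => dist (v (T n ∪ {i})) (v (T n))) atTop (nhds 0) := by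
      refine squeeze_zero (fun n => dist_nonneg) hb hdistzero
    exact hxbar.congr_dist (by simpa [dist_comm] using hd0')
  have hmemball : ∀ n, v (T n ∪ {i}) ∈ Metric.closedBall (c i) ‖w i‖ := fun n =>
    Set.mem_iInter₂.1 (hvmem (T n ∪ {i})) i
      (Finset.mem_union_right _ (Finset.mem_singleton_self i))
  have hxmem : xbar ∈ Metric.closedBall (c i) ‖w i‖ :=
    Metric.isClosed_closedBall.mem_of_tendsto hyi (Filter.Eventually.of_forall hmemball)
  rw [Metric.mem_closedBall, dist_eq_norm] at hxmem
  exact hxmem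

theorem surjectivity_of_maxMono_AK {N : ℕ} (hN : 2 ≤ N) (Γ : Set (Fin N → H))
    (hΓ : CMono Γ) (K : Finset (Fin N)) (hK1 : K.Nonempty) (hK2 : K ≠ Finset.univ)
    (hmax : MaxMonoRel {p : H × H | ∃ x ∈ Γ, p = (∑ i ∈ K, x i, ∑ i ∈ Kᶜ, x i)}) :
    ∀ a : Fin N → H, ∃ x ∈ Γ, ∃ d : Fin N → H, (∑ i, d i) = 0 ∧ x + d = a := by
  classical
  intro a
  set G : Set (H × H) := {p : H × H | ∃ x ∈ Γ, p = (∑ i ∈ K, x i, ∑ i ∈ Kᶜ, x i)} with hG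
  set s : H := ∑ i, a i with hs
  have hGne : G.Nonempty := by
    by_contra h
    rw [Set.not_nonempty_iff_eq_empty] at h
    have h0 : ((0 : H), (0 : H)) ∈ G := hmax.2 (0, 0) (by
      intro q hq
      rw [h] at hq
      exact absurd hq (Set.notMem_empty q))
    rw [h] at h0
    exact Set.notMem_empty _ h0
  haveI : Nonempty G := hGne.to_subtype
  set c : G → H := fun p => (2⁻¹ : ℝ) • (p.1.1 + s - p.1.2) with hc
  set w : G → H := fun p => (2⁻¹ : ℝ) • (p.1.1 + p.1.2 - s) with hw
  obtain ⟨y, hy⟩ := balls_inter c w (by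
    intro p q
    have hmono := hmax.1 p.1 p.2 q.1 q.2
    have h1 : c p - c q = (2⁻¹ : ℝ) • ((p.1.1 - q.1.1) - (p.1.2 - q.1.2)) := by
      rw [hc]; module
    have h2 : w p - w q = (2⁻¹ : ℝ) • ((p.1.1 - q.1.1) + (p.1.2 - q.1.2)) := by
      rw [hw]; module
    rw [h1, h2, norm_smul, norm_smul]
    have h3 : ‖(p.1.1 - q.1.1) - (p.1.2 - q.1.2)‖ ≤ ‖(p.1.1 - q.1.1) + (p.1.2 - q.1.2)‖ :=
      norm_sub_le_norm_add_of_inner_nonneg hmono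
    have h4 : (0:ℝ) ≤ ‖(2⁻¹ : ℝ)‖ := norm_nonneg _
    exact mul_le_mul_of_nonneg_left h3 h4)
  have hrel : ∀ q ∈ G, 0 ≤ ⟪y - q.1, (s - y) - q.2⟫ := by
    intro q hq
    have hyq := hy ⟨q, hq⟩
    have h1 : y - c ⟨q, hq⟩ = (2⁻¹ : ℝ) • ((y - q.1) - ((s - y) - q.2)) := by
      rw [hc]; module
    have h2 : w ⟨q, hq⟩ = -((2⁻¹ : ℝ) • ((y - q.1) + ((s - y) - q.2))) := by
      rw [hw]; module
    rw [h1, h2, norm_neg, norm_smul, norm_smul] at hyq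
    have h5 : (0:ℝ) < ‖(2⁻¹ : ℝ)‖ := by norm_num
    have h3 : ‖(y - q.1) - ((s - y) - q.2)‖ ≤ ‖(y - q.1) + ((s - y) - q.2)‖ :=
      le_of_mul_le_mul_left hyq h5
    exact inner_nonneg_of_norm_sub_le_norm_add h3
  have hmem : (y, s - y) ∈ G := hmax.2 (y, s - y) hrel
  obtain ⟨x, hxΓ, hxeq⟩ := hmem
  have h1 : y = ∑ i ∈ K, x i := congrArg Prod.fst hxeq
  have h2 : s - y = ∑ i ∈ Kᶜ, x i := congrArg Prod.snd hxeq
  have hsum : ∑ i, x i = s := by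
    rw [← Finset.sum_add_sum_compl K x, ← h1, ← h2]
    abel
  refine ⟨x, hxΓ, a - x, ?_, ?_⟩
  · have hsa : ∑ i, (a - x) i = ∑ i, a i - ∑ i, x i := by
      simp [Pi.sub_apply, Finset.sum_sub_distrib]
    rw [hsa, hsum, ← hs, sub_self]
  · abel
end AuxHilbert
end
end

section
/- Let Γ ⊆ H^N be c-monotone with Γ + Δ^⊥ = H^N. Then Γ is maximally c-monotone: if u ∈ H^N is such that Γ ∪ {u} is c-monotone, then u ∈ Γ. -/
open scoped RealInnerProductSpace BigOperators

noncomputable section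

variable {H : Type*} [NormedAddCommGroup H] [InnerProductSpace ℝ H] [CompleteSpace H]

/-- If `Γ` is `c`-monotone and `Γ + Δ^⊥ = H^N`, then `Γ` is maximally `c`-monotone. -/
theorem max_c_monotone_of_gamma_add_diagPerp_eq_univ {N : ℕ} (hN : 2 ≤ N)
    (Γ : Set (Fin N → H)) (hΓ : CMono Γ)
    (hsurj : ∀ a : Fin N → H, ∃ x ∈ Γ, ∃ d : Fin N → H, (∑ i, d i) = 0 ∧ x + d = a)
    (u : Fin N → H) (hu : CMono (Γ ∪ {u})) : u ∈ Γ := by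
  obtain ⟨x, hx, d, hd, hxd⟩ := hsurj u
  have hdi : ∀ i, d i = 0 := by
    intro i
    have hKne : ({i} : Finset (Fin N)) ≠ Finset.univ := by
      intro h
      have : Finset.card ({i} : Finset (Fin N)) = N := by
        rw [h]; simp
      simp at this
      omega
    have h := hu u (Or.inr rfl) x (Or.inl hx) {i} ⟨i, Finset.mem_singleton_self i⟩ hKne
    have hdui : ∀ j, u j - x j = d j := by
      intro j
      have := congrFun hxd j
      simp only [Pi.add_apply] at this
      rw [← this]; abel
    simp only [hdui] at h
    rw [Finset.sum_singleton] at h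
    have hsum : ∑ j ∈ ({i} : Finset (Fin N))ᶜ, d j = -d i := by
      have := Finset.sum_compl_add_sum ({i} : Finset (Fin N)) d
      rw [hd, Finset.sum_singleton] at this
      linear_combination (norm := module) this
    rw [hsum, inner_neg_right, real_inner_self_eq_norm_sq] at h
    have : ‖d i‖ = 0 := by nlinarith [norm_nonneg (d i), sq_nonneg ‖d i‖]
    simpa using this
  have : d = 0 := funext hdi
  rw [this, add_zero] at hxd
  rwa [← hxd]
end
end

section
/- Let T₂, ..., T_N : H → H be continuous maps such that Γ = {(x, T₂x, ..., T_N x) : x ∈ H} is c-monotone. Then Γ is maximally c-monotone: any point u ∈ H^N that is c-monotonically related to Γ (i.e., Γ ∪ {u} is c-monotone) belongs to Γ. -/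
open scoped RealInnerProductSpace BigOperators

noncomputable section

variable {H : Type*} [NormedAddCommGroup H] [InnerProductSpace ℝ H] [CompleteSpace H]

/-- A `c`-monotone graph of a continuous map `x ↦ (x, T₂x, ..., T_Nx)` is
maximally `c`-monotone. -/
theorem continuous_c_monotone_is_maximal {N : ℕ} (hN : 2 ≤ N)
    (T : Fin N → H → H) (hT0 : T ⟨0, by omega⟩ = id)
    (hcont : ∀ i, Continuous (T i))
    (hΓ : CMono {x : Fin N → H | ∃ a : H, x = fun i => T i a})
    (u : Fin N → H)
    (hu : CMono ({x : Fin N → H | ∃ a : H, x = fun i => T i a} ∪ {u})) :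
    u ∈ {x : Fin N → H | ∃ a : H, x = fun i => T i a} := by
  classical
  set i0 : Fin N := ⟨0, by omega⟩ with hi0
  set a := u i0 with ha
  have hT0' : ∀ b : H, T i0 b = b := fun b => by rw [hT0]; rfl
  have hmemu : u ∈ ({x : Fin N → H | ∃ a : H, x = fun i => T i a} ∪ {u}) :=
    Or.inr rfl
  have hmemg : ∀ b : H,
      (fun i => T i b) ∈ ({x : Fin N → H | ∃ a : H, x = fun i => T i a} ∪ {u}) :=
    fun b => Or.inl ⟨b, rfl⟩
  have hK1 : ∀ j : Fin N, ({j} : Finset (Fin N)) ≠ Finset.univ := by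
    intro j h
    have h1 : (({j} : Finset (Fin N)).card) = N := by
      rw [h, Finset.card_univ, Fintype.card_fin]
    simp at h1
    omega
  -- Step 1: the off-diagonal sum vanishes
  have hS : ∑ i ∈ ({i0}ᶜ : Finset (Fin N)), (u i - T i a) = 0 := by
    set S := ∑ i ∈ ({i0}ᶜ : Finset (Fin N)), (u i - T i a) with hSdef
    have key : ∀ w : H, 0 ≤ ⟪w, S⟫ := by
      intro w
      set f : ℝ → ℝ := fun t => ⟪w, ∑ i ∈ ({i0}ᶜ : Finset (Fin N)), (u i - T i (a - t • w))⟫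
        with hf
      have hfc : Continuous f := by
        apply Continuous.inner continuous_const
        apply continuous_finset_sum
        intro i _
        exact continuous_const.sub ((hcont i).comp
          (continuous_const.sub (continuous_id.smul continuous_const)))
      have hpos : ∀ t : ℝ, 0 < t → 0 ≤ f t := by
        intro t ht
        have h := hu u hmemu (fun i => T i (a - t • w)) (hmemg _) {i0}
          (Finset.singleton_nonempty _) (hK1 i0)
        rw [Finset.sum_singleton] at h
        have h2 : u i0 - T i0 (a - t • w) = t • w := by
          rw [hT0']; rw [← ha]; abel
        rw [h2, real_inner_smul_left] at h
        have := nonneg_of_mul_nonneg_right h ht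
        exact this
      have htend : Filter.Tendsto f (nhdsWithin 0 (Set.Ioi 0)) (nhds (f 0)) :=
        (hfc.tendsto 0).mono_left nhdsWithin_le_nhds
      have hev : ∀ᶠ t in nhdsWithin (0:ℝ) (Set.Ioi 0), 0 ≤ f t :=
        eventually_mem_nhdsWithin.mono fun t ht => hpos t ht
      have h0 : 0 ≤ f 0 := ge_of_tendsto htend hev
      have : f 0 = ⟪w, S⟫ := by
        simp only [hf, zero_smul, sub_zero, hSdef]
      linarith [h0, this ▸ h0]
    have := key (-S)
    rw [inner_neg_left] at this
    have hle : ⟪S, S⟫ ≤ 0 := by linarith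
    have := le_antisymm hle real_inner_self_nonneg
    exact inner_self_eq_zero.mp this
  -- Step 2: each coordinate vanishes
  have hd : ∀ j : Fin N, u j - T j a = 0 := by
    have hsum : ∑ i : Fin N, (u i - T i a) = 0 := by
      rw [← Finset.sum_add_sum_compl {i0} (fun i => u i - T i a),
        Finset.sum_singleton, hS, hT0', ← ha]
      abel
    intro j
    by_cases hj : j = i0
    · rw [hj, hT0', ← ha, sub_self]
    · have h := hu u hmemu (fun i => T i a) (hmemg a) {j}
        (Finset.singleton_nonempty _) (hK1 j)
      rw [Finset.sum_singleton] at h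
      have hc : ∑ i ∈ ({j}ᶜ : Finset (Fin N)), (u i - T i a) = -(u j - T j a) := by
        have := Finset.sum_add_sum_compl {j} (fun i => u i - T i a)
        rw [Finset.sum_singleton, hsum] at this
        exact eq_neg_of_add_eq_zero_right this
      rw [hc, inner_neg_right] at h
      have hle : ⟪u j - T j a, u j - T j a⟫ ≤ 0 := by linarith
      exact inner_self_eq_zero.mp (le_antisymm hle real_inner_self_nonneg)
  exact ⟨a, funext fun i => by have := hd i; rwa [sub_eq_zero] at this⟩
end
end

section
/- Let f₁,...,f_N : H → ℝ ∪ {+∞} be proper, lower semicontinuous convex functions. Then c ≤ f₁ ⊕ ... ⊕ f_N (i.e., Σ_{i<j}⟨x_i,x_j⟩ ≤ Σ_i f_i(x_i) for all x ∈ H^N) if and only if for all s ∈ H, Σ_{i=1}^N e_{f_i^*}(s) ≤ ½‖s‖², where e_g denotes the Moreau envelope e_g(s) = inf_x (g(x) + ½‖s-x‖²) and f^* is the Fenchel conjugate. -/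
set_option linter.unusedSectionVars false
set_option linter.unusedVariables false


open scoped RealInnerProductSpace BigOperators

noncomputable section

variable {H : Type*} [NormedAddCommGroup H] [InnerProductSpace ℝ H] [CompleteSpace H]

/-- `q(x) = ½‖x‖²`. -/
def q (x : H) : ℝ := (1 / 2) * ‖x‖ ^ 2

/-- Convexity for extended-real-valued functions. -/
def EConvex (f : H → EReal) : Prop :=
  ∀ x y : H, ∀ a b : ℝ, 0 ≤ a → 0 ≤ b → a + b = 1 →
    f (a • x + b • y) ≤ (a : EReal) * f x + (b : EReal) * f y

/-- The Fenchel conjugate `f*(u) = sup_x (⟪u,x⟫ - f(x))`. -/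
def econj (f : H → EReal) (u : H) : EReal :=
  ⨆ x : H, ((⟪u, x⟫ : ℝ) : EReal) - f x

/-- The Moreau envelope `e_f(s) = inf_x (f(x) + q(s - x))`. -/
def env (f : H → EReal) (s : H) : EReal :=
  ⨅ x : H, f x + ((q (s - x) : ℝ) : EReal)


lemma q_nonneg (x : H) : 0 ≤ q x := by
  have := sq_nonneg ‖x‖; unfold q; positivity

lemma q_sub_eq (s x : H) : q (s - x) = q s - ⟪s, x⟫ + q x := by
  unfold q; rw [norm_sub_sq_real]; ring

lemma cost_id {N : ℕ} (x : Fin N → H) : 2 * cost x + ∑ i, ‖x i‖ ^ 2 = ‖∑ i, x i‖ ^ 2 := by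
  have h : ‖∑ i, x i‖ ^ 2 = ∑ i : Fin N, ∑ j : Fin N, ⟪x i, x j⟫ := by
    rw [← real_inner_self_eq_norm_sq, sum_inner]
    exact Finset.sum_congr rfl fun i _ => inner_sum _ _ _
  have key : ∀ i j : Fin N, ⟪x i, x j⟫ =
      (if i < j then ⟪x i, x j⟫ else 0) + (if j < i then ⟪x i, x j⟫ else 0)
        + (if i = j then ⟪x i, x j⟫ else 0) := by
    intro i j
    rcases lt_trichotomy i j with h1 | h1 | h1
    · simp [h1, not_lt.2 h1.le, h1.ne]
    · simp [h1]
    · simp [h1, not_lt.2 h1.le, h1.ne']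
  have h2 : ∑ i : Fin N, ∑ j : Fin N, ⟪x i, x j⟫ =
      (∑ i : Fin N, ∑ j : Fin N, if i < j then ⟪x i, x j⟫ else 0)
      + (∑ i : Fin N, ∑ j : Fin N, if j < i then ⟪x i, x j⟫ else 0)
      + (∑ i : Fin N, ∑ j : Fin N, if i = j then ⟪x i, x j⟫ else 0) := by
    rw [← Finset.sum_add_distrib, ← Finset.sum_add_distrib]
    refine Finset.sum_congr rfl fun i _ => ?_
    rw [← Finset.sum_add_distrib, ← Finset.sum_add_distrib]
    exact Finset.sum_congr rfl fun j _ => key i j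
  have h3 : (∑ i : Fin N, ∑ j : Fin N, if j < i then ⟪x i, x j⟫ else 0) = cost x := by
    rw [Finset.sum_comm]
    unfold cost
    refine Finset.sum_congr rfl fun j _ => Finset.sum_congr rfl fun i _ => ?_
    rcases lt_or_ge j i with h1 | h1
    · simp [h1, real_inner_comm]
    · simp [not_lt.2 h1]
  have h4 : (∑ i : Fin N, ∑ j : Fin N, if i = j then ⟪x i, x j⟫ else 0) = ∑ i, ‖x i‖ ^ 2 := by
    refine Finset.sum_congr rfl fun i _ => ?_
    rw [Finset.sum_ite_eq]
    simp [real_inner_self_eq_norm_sq]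
  rw [h, h2, h3, h4]
  unfold cost
  ring

lemma master {N : ℕ} (x : Fin N → H) (s : H) :
    cost x + ∑ i, q (s - x i) = ((N : ℝ) - 1) * q s + q ((∑ i, x i) - s) := by
  have hc := cost_id x
  have h1 : ∑ i, q (s - x i) = (N : ℝ) * q s - ⟪s, ∑ i, x i⟫ + ∑ i, q (x i) := by
    simp only [q_sub_eq, inner_sum, Finset.sum_add_distrib, Finset.sum_sub_distrib,
      Finset.sum_const, Finset.card_univ, Fintype.card_fin, nsmul_eq_mul]
  have h5 : ∑ i, q (x i) = (1/2) * ∑ i, ‖x i‖ ^ 2 := by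
    simp [q, Finset.mul_sum]
  have h2 : q ((∑ i, x i) - s) = q (∑ i, x i) - ⟪∑ i, x i, s⟫ + q s := q_sub_eq _ _
  have h3 : ⟪s, ∑ i, x i⟫ = ⟪∑ i, x i, s⟫ := real_inner_comm _ _
  have h4 : q (∑ i, x i) = 1/2 * ‖∑ i, x i‖ ^ 2 := rfl
  rw [h1, h5, h2, h3, h4]
  linarith

lemma ecoe_sum {ι : Type*} (t : Finset ι) (g : ι → ℝ) :
    ((∑ i ∈ t, g i : ℝ) : EReal) = ∑ i ∈ t, ((g i : ℝ) : EReal) :=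
  map_sum (⟨⟨Real.toEReal, EReal.coe_zero⟩, EReal.coe_add⟩ : ℝ →+ EReal) g t

lemma q_mid (x y s : H) :
    q (s - ((1/2 : ℝ) • x + (1/2 : ℝ) • y)) =
      1/2 * q (s - x) + 1/2 * q (s - y) - 1/8 * ‖x - y‖ ^ 2 := by
  have h : s - ((1/2 : ℝ) • x + (1/2 : ℝ) • y) = (1/2 : ℝ) • ((s - x) + (s - y)) := by
    rw [smul_add]; module
  have h2 : x - y = (s - y) - (s - x) := by abel
  rw [h, h2]
  simp only [q, norm_smul, mul_pow, norm_add_sq_real, norm_sub_sq_real, inner_sub_left,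
    inner_sub_right, real_inner_self_eq_norm_sq, Real.norm_eq_abs, sq_abs]
  rw [real_inner_comm x s, real_inner_comm y s, real_inner_comm y x]
  ring

lemma q_smul_sub (a b : H) (t : ℝ) :
    q (a - t • b) = q a - t * ⟪a, b⟫ + t ^ 2 * q b := by
  unfold q
  rw [norm_sub_sq_real, real_inner_smul_right, norm_smul, mul_pow]
  simp only [Real.norm_eq_abs, sq_abs]
  ring

lemma prox_key (f : H → EReal) (hconv : EConvex f) (hlsc : LowerSemicontinuous f)
    (hnb : ∀ x, f x ≠ ⊥) (a : H) (ha : f a ≠ ⊤) (s : H) (m : ℝ)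
    (hm : ∀ x, ((m : ℝ) : EReal) ≤ f x + ((q (s - x) : ℝ) : EReal)) :
    ∃ (x₀ : H) (F : ℝ), f x₀ = (F : EReal) ∧
      (∀ x : H, ((F + q (s - x₀) : ℝ) : EReal) ≤ f x + ((q (s - x) : ℝ) : EReal)) ∧
      env (econj f) s ≤ ((q s - (F + q (s - x₀)) : ℝ) : EReal) := by
  classical
  set φ : H → EReal := fun x => f x + ((q (s - x) : ℝ) : EReal) with hφ
  have hφbot : ∀ x, φ x ≠ ⊥ := by
    intro x h
    rcases EReal.add_eq_bot_iff.1 h with h' | h'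
    · exact hnb x h'
    · exact EReal.coe_ne_bot _ h'
  set L : EReal := ⨅ x, φ x with hL
  have hmL : (m : EReal) ≤ L := le_iInf fun x => hm x
  have hLa : L ≤ φ a := iInf_le _ a
  have haR : f a ≠ ⊥ := hnb a
  have hφa : φ a ≠ ⊤ := by
    simp only [hφ]
    rw [← EReal.coe_toReal ha haR, ← EReal.coe_add]
    exact EReal.coe_ne_top _
  have hLtop : L ≠ ⊤ := fun h => hφa (top_le_iff.1 (h ▸ hLa))
  have hLbot : L ≠ ⊥ := fun h => EReal.coe_ne_bot m (bot_le.antisymm (h ▸ hmL)).symm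
  set μ : ℝ := L.toReal with hμ
  have hLμ : L = (μ : EReal) := (EReal.coe_toReal hLtop hLbot).symm
  -- minimizing sequence
  have hseq : ∀ n : ℕ, ∃ x, φ x < ((μ + 1/(n+1) : ℝ) : EReal) := by
    intro n
    rw [← iInf_lt_iff, ← hL, hLμ, EReal.coe_lt_coe_iff]
    have : (0:ℝ) < 1/(n+1) := by positivity
    linarith
  choose z hz using hseq
  -- real values
  have hφz : ∀ n, φ (z n) ≠ ⊤ := fun n h => by
    exact absurd (hz n) (by rw [h]; exact not_lt.2 le_top)
  set g : ℕ → ℝ := fun n => (φ (z n)).toReal with hg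
  have hgz : ∀ n, φ (z n) = ((g n : ℝ) : EReal) := fun n =>
    (EReal.coe_toReal (hφz n) (hφbot _)).symm
  have hglt : ∀ n, g n < μ + 1/(n+1) := fun n => by
    have := hz n; rw [hgz n, EReal.coe_lt_coe_iff] at this; exact this
  have hgge : ∀ n, μ ≤ g n := fun n => by
    have : L ≤ φ (z n) := iInf_le _ _
    rw [hLμ, hgz n, EReal.coe_le_coe_iff] at this; exact this
  have hfz : ∀ n, f (z n) ≠ ⊤ := fun n h => by
    apply hφz n
    simp only [hφ, h]
    exact EReal.top_add_of_ne_bot (EReal.coe_ne_bot _)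
  set c : ℕ → ℝ := fun n => (f (z n)).toReal with hc
  have hcz : ∀ n, f (z n) = ((c n : ℝ) : EReal) := fun n =>
    (EReal.coe_toReal (hfz n) (hnb _)).symm
  have hgc : ∀ n, g n = c n + q (s - z n) := fun n => by
    have : φ (z n) = ((c n + q (s - z n) : ℝ) : EReal) := by
      simp only [hφ, hcz n, EReal.coe_add]
    rw [hgz n] at this
    exact EReal.coe_eq_coe_iff.1 this
  -- strong convexity estimate
  have hpar : ∀ n k : ℕ, μ + 1/8 * ‖z n - z k‖ ^ 2 ≤ 1/2 * g n + 1/2 * g k := by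
    intro n k
    have hcv := hconv (z n) (z k) (1/2) (1/2) (by norm_num) (by norm_num) (by norm_num)
    rw [hcz n, hcz k] at hcv
    have hcv' : f ((1/2 : ℝ) • z n + (1/2 : ℝ) • z k) ≤ ((1/2 * c n + 1/2 * c k : ℝ) : EReal) := by
      rw [EReal.coe_add, EReal.coe_mul, EReal.coe_mul]; exact hcv
    set w := (1/2 : ℝ) • z n + (1/2 : ℝ) • z k with hw
    have h1 : (μ : EReal) ≤ φ w := hLμ ▸ iInf_le _ w
    have h2 : φ w ≤ ((1/2 * c n + 1/2 * c k + q (s - w) : ℝ) : EReal) := by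
      simp only [hφ, EReal.coe_add]
      exact add_le_add_left hcv' _
    have h3 : μ ≤ 1/2 * c n + 1/2 * c k + q (s - w) :=
      EReal.coe_le_coe_iff.1 (h1.trans h2)
    have h4 : q (s - w) = 1/2 * q (s - z n) + 1/2 * q (s - z k) - 1/8 * ‖z n - z k‖ ^ 2 :=
      q_mid _ _ _
    rw [hgc n, hgc k]
    rw [h4] at h3
    linarith
  -- Cauchy
  have hcauchy : CauchySeq z := by
    rw [Metric.cauchySeq_iff']
    intro ε hε
    obtain ⟨K, hK⟩ := exists_nat_one_div_lt (show (0:ℝ) < ε^2/8 by positivity)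
    refine ⟨K, fun n hn => ?_⟩
    have h1 := hpar n K
    have h2 := hglt n
    have h3 := hglt K
    have h4 : 1/((n:ℝ)+1) ≤ 1/((K:ℝ)+1) := by
      apply one_div_le_one_div_of_le (by positivity)
      have : (K:ℝ) ≤ n := Nat.cast_le.2 hn
      linarith
    have h5 : ‖z n - z K‖ ^ 2 < ε ^ 2 := by
      have : 1/((K:ℝ)+1) < ε^2/8 := hK
      nlinarith
    rw [dist_eq_norm]
    nlinarith [norm_nonneg (z n - z K), hε]
  obtain ⟨x₀, hx₀⟩ := cauchySeq_tendsto_of_complete hcauchy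
  -- lower semicontinuity: φ x₀ ≤ μ
  have hfx₀ : f x₀ ≤ ((μ - q (s - x₀) : ℝ) : EReal) := by
    by_contra hcon
    push_neg at hcon
    obtain ⟨t, ht1, ht2⟩ := EReal.exists_between_coe_real hcon
    rw [EReal.coe_lt_coe_iff] at ht1
    have hev1 : ∀ᶠ n in Filter.atTop, ((t : ℝ) : EReal) < f (z n) :=
      hx₀.eventually (hlsc x₀ t ht2)
    have hqt : Filter.Tendsto (fun n => q (s - z n)) Filter.atTop (nhds (q (s - x₀))) := by
      have hqc : Continuous (fun y : H => q y) := by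
        unfold q; exact continuous_const.mul ((continuous_pow 2).comp continuous_norm)
      exact (hqc.tendsto _).comp (Filter.Tendsto.const_sub s hx₀)
    set δ : ℝ := (t - (μ - q (s - x₀)))/3 with hδ
    have hδpos : 0 < δ := by rw [hδ]; linarith
    have hev2 : ∀ᶠ n in Filter.atTop, |q (s - z n) - q (s - x₀)| < δ := by
      have := Metric.tendsto_atTop.1 hqt δ hδpos
      obtain ⟨K, hK⟩ := this
      exact Filter.eventually_atTop.2 ⟨K, fun n hn => by
        have := hK n hn; rwa [Real.dist_eq] at this⟩
    have hev3 : ∀ᶠ (n : ℕ) in Filter.atTop, 1/((n:ℝ)+1) < δ := by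
      obtain ⟨K, hK⟩ := exists_nat_one_div_lt hδpos
      refine Filter.eventually_atTop.2 ⟨K, fun n hn => ?_⟩
      calc 1/((n:ℝ)+1) ≤ 1/((K:ℝ)+1) := by
            apply one_div_le_one_div_of_le (by positivity)
            exact_mod_cast Nat.succ_le_succ hn
        _ < δ := hK
    obtain ⟨n, h1, h2, h3⟩ := ((hev1.and (hev2.and hev3)).exists)
    rw [hcz n, EReal.coe_lt_coe_iff] at h1
    have h4 : c n + q (s - z n) < μ + 1/((n:ℝ)+1) := by
      rw [← hgc n]; exact hglt n
    have h5 : q (s - x₀) - δ < q (s - z n) := by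
      have := abs_lt.1 h2; linarith
    rw [hδ] at *
    linarith
  have hfx₀top : f x₀ ≠ ⊤ := fun h => by
    rw [h] at hfx₀; exact EReal.coe_ne_top _ (top_le_iff.1 hfx₀)
  
  set F : ℝ := (f x₀).toReal with hF
  have hfx₀R : f x₀ = (F : EReal) := (EReal.coe_toReal hfx₀top (hnb x₀)).symm
  have hFle : F + q (s - x₀) ≤ μ := by
    have h := hfx₀; rw [hfx₀R, EReal.coe_le_coe_iff] at h; linarith
  have hmin : ∀ x, ((F + q (s - x₀) : ℝ) : EReal) ≤ φ x := by
    intro x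
    have h1 : L ≤ φ x := iInf_le _ _
    rw [hLμ] at h1
    exact le_trans (EReal.coe_le_coe_iff.2 hFle) h1
  set v : H := s - x₀ with hv
  have hsub : ∀ y : H, f x₀ + ((⟪v, y - x₀⟫ : ℝ) : EReal) ≤ f y := by
    intro y
    by_cases hy : f y = ⊤
    · rw [hy]; exact le_top
    have hyR : f y = (((f y).toReal : ℝ) : EReal) := (EReal.coe_toReal hy (hnb y)).symm
    set G : ℝ := (f y).toReal with hG
    rw [hfx₀R, hyR, ← EReal.coe_add, EReal.coe_le_coe_iff]
    have key : ∀ t : ℝ, 0 < t → t < 1 → F + ⟪v, y - x₀⟫ - t * q (y - x₀) ≤ G := by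
      intro t ht0 ht1
      have hcv := hconv y x₀ t (1 - t) ht0.le (by linarith) (by ring)
      rw [hyR, hfx₀R] at hcv
      have hcv' : f (t • y + (1-t) • x₀) ≤ ((t * G + (1-t) * F : ℝ) : EReal) := by
        rw [EReal.coe_add, EReal.coe_mul, EReal.coe_mul]; exact hcv
      set w := t • y + (1-t) • x₀ with hwdef
      have h1 : ((F + q (s - x₀) : ℝ) : EReal) ≤ φ w := hmin w
      have h2 : φ w ≤ ((t * G + (1-t) * F + q (s - w) : ℝ) : EReal) := by
        simp only [hφ, EReal.coe_add]; exact add_le_add_left hcv' _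
      have h3 : F + q (s - x₀) ≤ t * G + (1-t) * F + q (s - w) :=
        EReal.coe_le_coe_iff.1 (h1.trans h2)
      have hw : s - w = (s - x₀) - t • (y - x₀) := by
        rw [hwdef]; rw [smul_sub]; module
      have h4 : q (s - w) = q (s - x₀) - t * ⟪s - x₀, y - x₀⟫ + t^2 * q (y - x₀) := by
        rw [hw]; exact q_smul_sub _ _ _
      rw [h4] at h3
      rw [hv]
      nlinarith [h3, ht0]
    by_contra hcon
    push_neg at hcon
    have hqb : 0 ≤ q (y - x₀) := q_nonneg _
    set ε : ℝ := F + ⟪v, y - x₀⟫ - G with hε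
    have hεpos : 0 < ε := by rw [hε]; linarith
    set t : ℝ := min (1/2) (ε / (2 * (q (y - x₀) + 1))) with ht
    have htpos : 0 < t := lt_min (by norm_num) (by positivity)
    have ht1 : t < 1 := lt_of_le_of_lt (min_le_left _ _) (by norm_num)
    have hk := key t htpos ht1
    have h5 : t ≤ ε / (2 * (q (y - x₀) + 1)) := min_le_right _ _
    have h6 : t * q (y - x₀) ≤ ε / (2 * (q (y - x₀) + 1)) * q (y - x₀) :=
      mul_le_mul_of_nonneg_right h5 hqb
    have h7 : ε / (2 * (q (y - x₀) + 1)) * q (y - x₀) < ε := by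
      rw [div_mul_eq_mul_div, div_lt_iff₀ (by positivity)]
      nlinarith
    have : ε ≤ t * q (y - x₀) := by rw [hε]; linarith
    linarith
  have hconj : econj f v ≤ ((⟪v, x₀⟫ - F : ℝ) : EReal) := by
    refine iSup_le fun y => ?_
    by_cases hy : f y = ⊤
    · rw [hy, EReal.sub_top]; exact bot_le
    · have hyR : f y = (((f y).toReal : ℝ) : EReal) := (EReal.coe_toReal hy (hnb y)).symm
      rw [hyR, ← EReal.coe_sub, EReal.coe_le_coe_iff]
      have h := hsub y
      rw [hfx₀R, hyR, ← EReal.coe_add, EReal.coe_le_coe_iff] at h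
      have hi : ⟪v, y - x₀⟫ = ⟪v, y⟫ - ⟪v, x₀⟫ := inner_sub_right _ _ _
      linarith
  have henv : env (econj f) s ≤ ((q s - (F + q (s - x₀)) : ℝ) : EReal) := by
    have h1 : env (econj f) s ≤ econj f v + ((q (s - v) : ℝ) : EReal) := iInf_le _ v
    have h2 : s - v = x₀ := by rw [hv]; abel
    have h3 : econj f v + ((q (s - v) : ℝ) : EReal) ≤ ((⟪v, x₀⟫ - F + q x₀ : ℝ) : EReal) := by
      rw [h2, EReal.coe_add]; exact add_le_add_left hconj _
    refine h1.trans (h3.trans ?_)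
    rw [EReal.coe_le_coe_iff]
    have hq := q_sub_eq s x₀
    have hi : ⟪v, x₀⟫ = ⟪s, x₀⟫ - ⟪x₀, x₀⟫ := by rw [hv]; exact inner_sub_left _ _ _
    have hx : ⟪x₀, x₀⟫ = 2 * q x₀ := by
      rw [real_inner_self_eq_norm_sq]; unfold q; ring
    linarith
  exact ⟨x₀, F, hfx₀R, fun x => hmin x, henv⟩

lemma esum_ne_bot {ι : Type*} (t : Finset ι) (g : ι → EReal) (h : ∀ j ∈ t, g j ≠ ⊥) :
    ∑ j ∈ t, g j ≠ ⊥ := by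
  classical
  induction t using Finset.cons_induction with
  | empty => simp
  | cons i t hi ih =>
    rw [Finset.sum_cons]
    intro hbot
    rcases EReal.add_eq_bot_iff.1 hbot with h' | h'
    · exact h i (Finset.mem_cons_self i t) h'
    · exact ih (fun j hj => h j (Finset.mem_cons_of_mem hj)) h'

lemma esum_top {ι : Type*} (t : Finset ι) (g : ι → EReal) (h : ∀ j ∈ t, g j ≠ ⊥)
    {i : ι} (hi : i ∈ t) (htop : g i = ⊤) : ∑ j ∈ t, g j = ⊤ := by
  classical
  rw [← Finset.add_sum_erase _ _ hi, htop]
  exact EReal.top_add_of_ne_bot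
    (esum_ne_bot _ _ fun j hj => h j (Finset.mem_of_mem_erase hj))

lemma three_point (s x u : H) : q s ≤ ⟪u, x⟫ + q (s - u) + q (s - x) := by
  have h0 := q_nonneg (s - x - u)
  have h1 : q (s - x - u) = q (s - x) - ⟪s - x, u⟫ + q u := q_sub_eq _ _
  have h2 : ⟪s - x, u⟫ = ⟪s, u⟫ - ⟪x, u⟫ := inner_sub_left _ _ _
  have h3 : q (s - u) = q s - ⟪s, u⟫ + q u := q_sub_eq _ _
  have h4 : ⟪u, x⟫ = ⟪x, u⟫ := real_inner_comm _ _
  linarith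

lemma q_zero : q (0 : H) = 0 := by unfold q; simp

theorem cost_le_splitting_iff_envelope_ineq {N : ℕ} (hN : 2 ≤ N)
    (f : Fin N → H → EReal)
    (hproper : ∀ i, (∃ x, f i x ≠ ⊤) ∧ ∀ x, f i x ≠ ⊥)
    (hlsc : ∀ i, LowerSemicontinuous (f i))
    (hconv : ∀ i, EConvex (f i)) :
    (∀ x : Fin N → H, ((cost x : ℝ) : EReal) ≤ ∑ i, f i (x i)) ↔
    (∀ s : H, ∑ i, env (econj (f i)) s ≤ ((q s : ℝ) : EReal)) := by
  classical
  constructor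
  · -- forward
    intro hc s
    choose a ha using fun i => (hproper i).1
    -- lower bound for each φ_i
    have hbnd : ∀ i : Fin N, ∃ m : ℝ, ∀ x : H,
        ((m : ℝ) : EReal) ≤ f i x + ((q (s - x) : ℝ) : EReal) := by
      intro i
      set C : ℝ := ∑ j ∈ Finset.univ.erase i, (f j (a j)).toReal with hC
      set D : ℝ := ∑ j ∈ Finset.univ.erase i, q (s - a j) with hD
      refine ⟨((N : ℝ) - 1) * q s - D - C, fun x => ?_⟩
      set y : Fin N → H := Function.update a i x with hy
      have hyi : y i = x := Function.update_self i x a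
      have hyj : ∀ j ∈ Finset.univ.erase i, y j = a j := fun j hj =>
        Function.update_of_ne (Finset.ne_of_mem_erase hj) x a
      have hsum : ∑ j, f j (y j) = f i x + ((C : ℝ) : EReal) := by
        rw [← Finset.add_sum_erase _ _ (Finset.mem_univ i), hyi]
        congr 1
        rw [hC, ecoe_sum]
        refine Finset.sum_congr rfl fun j hj => ?_
        rw [hyj j hj]
        exact (EReal.coe_toReal (ha j) ((hproper j).2 _)).symm
      have hqsum : ∑ j, q (s - y j) = q (s - x) + D := by
        rw [← Finset.add_sum_erase _ _ (Finset.mem_univ i), hyi, hD]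
        congr 1
        exact Finset.sum_congr rfl fun j hj => by rw [hyj j hj]
      have hmaster := master y s
      have h0 := q_nonneg ((∑ j, y j) - s)
      have hcost : ((N : ℝ) - 1) * q s - q (s - x) - D ≤ cost y := by
        rw [hqsum] at hmaster; linarith
      have hcy := hc y
      rw [hsum] at hcy
      by_cases hfx : f i x = ⊤
      · rw [hfx, EReal.top_add_of_ne_bot (EReal.coe_ne_bot _)]
        exact le_top
      · have hfxR : f i x = (((f i x).toReal : ℝ) : EReal) :=
          (EReal.coe_toReal hfx ((hproper i).2 _)).symm
        rw [hfxR, ← EReal.coe_add, EReal.coe_le_coe_iff] at hcy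
        rw [hfxR, ← EReal.coe_add, EReal.coe_le_coe_iff]
        linarith
    choose m hm using hbnd
    choose x₀ F hFeq hmin henv using fun i =>
      prox_key (f i) (hconv i) (hlsc i) ((hproper i).2) (a i) (ha i) s (m i) (hm i)
    have hcx := hc x₀
    have hsumF : ∑ i, f i (x₀ i) = ((∑ i, F i : ℝ) : EReal) := by
      rw [ecoe_sum]; exact Finset.sum_congr rfl fun i _ => hFeq i
    rw [hsumF, EReal.coe_le_coe_iff] at hcx
    have hmaster := master x₀ s
    have h0 := q_nonneg ((∑ i, x₀ i) - s)
    have hkey : ((N : ℝ) - 1) * q s ≤ ∑ i, (F i + q (s - x₀ i)) := by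
      rw [Finset.sum_add_distrib]
      linarith
    calc ∑ i, env (econj (f i)) s
        ≤ ∑ i, ((q s - (F i + q (s - x₀ i)) : ℝ) : EReal) :=
          Finset.sum_le_sum fun i _ => henv i
      _ = ((∑ i, (q s - (F i + q (s - x₀ i))) : ℝ) : EReal) := (ecoe_sum _ _).symm
      _ ≤ ((q s : ℝ) : EReal) := by
          rw [EReal.coe_le_coe_iff, Finset.sum_sub_distrib, Finset.sum_const,
            Finset.card_univ, Fintype.card_fin, nsmul_eq_mul]
          linarith
  · -- backward
    intro he x
    by_cases hcase : ∀ i, f i (x i) ≠ ⊤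
    · set s : H := ∑ i, x i with hs
      have hciR : ∀ i, f i (x i) = (((f i (x i)).toReal : ℝ) : EReal) := fun i =>
        (EReal.coe_toReal (hcase i) ((hproper i).2 _)).symm
      set c : Fin N → ℝ := fun i => (f i (x i)).toReal with hcdef
      have hlow : ∀ i, ((q s - q (s - x i) - c i : ℝ) : EReal) ≤ env (econj (f i)) s := by
        intro i
        refine le_iInf fun u => ?_
        have h1 : ((⟪u, x i⟫ - c i : ℝ) : EReal) ≤ econj (f i) u := by
          have h := le_iSup (fun y => ((⟪u, y⟫ : ℝ) : EReal) - f i y) (x i)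
          rw [hciR i] at h
          rw [EReal.coe_sub]
          exact h
        have h2 : q s - q (s - x i) - c i ≤ ⟪u, x i⟫ - c i + q (s - u) := by
          have := three_point s (x i) u
          linarith
        calc ((q s - q (s - x i) - c i : ℝ) : EReal)
            ≤ ((⟪u, x i⟫ - c i + q (s - u) : ℝ) : EReal) := EReal.coe_le_coe_iff.2 h2
          _ ≤ econj (f i) u + ((q (s - u) : ℝ) : EReal) := by
              rw [EReal.coe_add]; exact add_le_add_left h1 _
      have hsum : ((∑ i, (q s - q (s - x i) - c i) : ℝ) : EReal) ≤ ((q s : ℝ) : EReal) := by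
        rw [ecoe_sum]
        exact le_trans (Finset.sum_le_sum fun i _ => hlow i) (he s)
      rw [EReal.coe_le_coe_iff, Finset.sum_sub_distrib, Finset.sum_sub_distrib,
        Finset.sum_const, Finset.card_univ, Fintype.card_fin, nsmul_eq_mul] at hsum
      have hmaster := master x s
      have hq0 : q ((∑ i, x i) - s) = 0 := by rw [← hs, sub_self, q_zero]
      have hgoal : cost x ≤ ∑ i, c i := by
        rw [hq0] at hmaster; linarith
      have hsumc : ∑ i, f i (x i) = ((∑ i, c i : ℝ) : EReal) := by
        rw [ecoe_sum]; exact Finset.sum_congr rfl fun i _ => hciR i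
      rw [hsumc, EReal.coe_le_coe_iff]
      exact hgoal
    · push_neg at hcase
      obtain ⟨i, hi⟩ := hcase
      rw [esum_top Finset.univ _ (fun j _ => (hproper j).2 _) (Finset.mem_univ i) hi]
      exact le_top
end
end

section
/- In ℝ^d with N marginals: let Q₁,...,Q_N be symmetric positive definite pairwise commuting d×d matrices, M_i = (Σ_{k≠i} Q_k)Q_i^{-1}, and q_{M_i}(x) = ½⟨x, M_i x⟩. Then Σ_{i<j}⟨x_i,x_j⟩ ≤ Σ_i q_{M_i}(x_i) for all (x₁,...,x_N) ∈ (ℝ^d)^N, with equality if and only if there exists v ∈ ℝ^d with x_i = Q_i v for all i. -/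
open Matrix
open scoped BigOperators

noncomputable section

section Aux
variable {n : Type*} [Fintype n] [DecidableEq n]

def psdSqrt {A : Matrix n n ℝ} (hA : A.PosSemidef) : Matrix n n ℝ :=
  (hA.1.eigenvectorUnitary : Matrix n n ℝ) * diagonal (Real.sqrt ∘ hA.1.eigenvalues) *
    star (hA.1.eigenvectorUnitary : Matrix n n ℝ)

lemma psdSqrt_isHermitian {A : Matrix n n ℝ} (hA : A.PosSemidef) : (psdSqrt hA).IsHermitian :=
  isHermitian_mul_mul_conjTranspose _ (isHermitian_diagonal _)

lemma psdSqrt_mul_self {A : Matrix n n ℝ} (hA : A.PosSemidef) : psdSqrt hA * psdSqrt hA = A := by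
  set U : Matrix n n ℝ := hA.1.eigenvectorUnitary.1 with hUdef
  have hU1 : star U * U = 1 := Unitary.coe_star_mul_self hA.1.eigenvectorUnitary
  have hspec : A = U * diagonal hA.1.eigenvalues * star U := by simpa using hA.1.spectral_theorem
  have hd : diagonal (Real.sqrt ∘ hA.1.eigenvalues) * diagonal (Real.sqrt ∘ hA.1.eigenvalues)
      = diagonal hA.1.eigenvalues := by
    rw [diagonal_mul_diagonal]; congr 1; ext i
    simp [Real.mul_self_sqrt (hA.eigenvalues_nonneg i)]
  rw [psdSqrt]
  calc U * diagonal (Real.sqrt ∘ hA.1.eigenvalues) * star U *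
        (U * diagonal (Real.sqrt ∘ hA.1.eigenvalues) * star U)
      = U * (diagonal (Real.sqrt ∘ hA.1.eigenvalues) * (star U * U) *
        diagonal (Real.sqrt ∘ hA.1.eigenvalues)) * star U := by simp only [mul_assoc]
    _ = A := by rw [hU1, mul_one, hd, ← hspec]

lemma sqrt_comm {A B : Matrix n n ℝ} (hA : A.PosSemidef) (h : A * B = B * A) :
    psdSqrt hA * B = B * psdSqrt hA := by
  set U : Matrix n n ℝ := hA.1.eigenvectorUnitary.1 with hUdef
  have hU1 : star U * U = 1 := Unitary.coe_star_mul_self hA.1.eigenvectorUnitary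
  have hU2 : U * star U = 1 := Unitary.coe_mul_star_self hA.1.eigenvectorUnitary
  have hc1 : ∀ X : Matrix n n ℝ, star U * (U * X) = X := fun X => by
    rw [← mul_assoc, hU1, one_mul]
  have hc2 : ∀ X : Matrix n n ℝ, U * (star U * X) = X := fun X => by
    rw [← mul_assoc, hU2, one_mul]
  set lam : n → ℝ := hA.1.eigenvalues with hlam
  set B' : Matrix n n ℝ := star U * B * U with hB'
  have hspec : A = U * diagonal lam * star U := by simpa using hA.1.spectral_theorem
  have hDB : diagonal lam * B' = B' * diagonal lam := by
    have e1 : star U * (A * U) = diagonal lam := by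
      rw [hspec]; simp only [mul_assoc, hc1, hc2]
      rw [hU1, mul_one]
    calc diagonal lam * B' = star U * (A * U) * (star U * B * U) := by rw [e1]
      _ = star U * ((A * B) * U) := by simp only [mul_assoc, hc1, hc2]
      _ = star U * ((B * A) * U) := by rw [h]
      _ = (star U * B * U) * (star U * (A * U)) := by simp only [mul_assoc, hc1, hc2]
      _ = B' * diagonal lam := by rw [e1]
  have hentry : ∀ i j, lam i * B' i j = B' i j * lam j := fun i j => by
    have := congrFun (congrFun hDB i) j
    simpa [Matrix.diagonal_mul, Matrix.mul_diagonal] using this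
  have hSB : diagonal (Real.sqrt ∘ lam) * B' = B' * diagonal (Real.sqrt ∘ lam) := by
    ext i j
    simp only [Matrix.diagonal_mul, Matrix.mul_diagonal, Function.comp_apply]
    rcases eq_or_ne (lam i) (lam j) with he | hne
    · rw [he]; ring
    · have hz : B' i j * (lam i - lam j) = 0 := by
        have h2 := hentry i j; ring_nf; ring_nf at h2; linarith
      rcases mul_eq_zero.mp hz with h0 | h0
      · simp [h0]
      · exact absurd (by linarith : lam i = lam j) hne
  have hsqrt : psdSqrt hA = U * diagonal (Real.sqrt ∘ lam) * star U := by
    rw [psdSqrt]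
  have hBrec : B = U * (B' * star U) := by
    rw [hB']; simp only [mul_assoc, hc1, hc2]; rw [hU2, mul_one]
  rw [hsqrt]
  calc U * diagonal (Real.sqrt ∘ lam) * star U * B
      = U * (diagonal (Real.sqrt ∘ lam) * B' * star U) := by
        rw [hBrec]; simp only [mul_assoc, hc1, hc2]
    _ = U * (B' * diagonal (Real.sqrt ∘ lam) * star U) := by rw [hSB]
    _ = B * (U * diagonal (Real.sqrt ∘ lam) * star U) := by
        rw [hBrec]; simp only [mul_assoc, hc1, hc2]

lemma isSymm_of_herm {M : Matrix n n ℝ} (h : M.IsHermitian) : M.IsSymm := by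
  ext i j
  rw [transpose_apply]
  have := congrFun (congrFun h.eq i) j
  simpa using this

lemma dot_symm (M : Matrix n n ℝ) (hM : M.IsSymm) (a b : n → ℝ) :
    a ⬝ᵥ M *ᵥ b = M *ᵥ a ⬝ᵥ b := by
  rw [dotProduct_mulVec]; conv_lhs => rw [← hM]
  rw [vecMul_transpose]

lemma star_triv (x : n → ℝ) : star x = x := by
  ext i; simp

lemma posDef_mul {A B : Matrix n n ℝ} (hA : A.PosDef) (hB : B.PosDef)
    (h : A * B = B * A) : (A * B).PosDef := by
  obtain ⟨S, hSsym, hSS, hSB⟩ : ∃ S : Matrix n n ℝ,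
      S.IsSymm ∧ S * S = A ∧ S * B = B * S :=
    ⟨psdSqrt hA.posSemidef, isSymm_of_herm (psdSqrt_isHermitian hA.posSemidef),
      psdSqrt_mul_self hA.posSemidef, sqrt_comm hA.posSemidef h⟩
  refine posDef_iff_dotProduct_mulVec.mpr ⟨?_, ?_⟩
  · rw [Matrix.IsHermitian, conjTranspose_mul, hA.1.eq, hB.1.eq, ← h]
  · intro y hy
    have hSy : S *ᵥ y ≠ 0 := by
      intro h0
      have hAy : A *ᵥ y = 0 := by rw [← hSS, ← mulVec_mulVec, h0, mulVec_zero]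
      have := hA.dotProduct_mulVec_pos hy
      rw [hAy, dotProduct_zero] at this
      exact lt_irrefl 0 this
    have key : star y ⬝ᵥ (A * B) *ᵥ y
        = star (S *ᵥ y) ⬝ᵥ B *ᵥ (S *ᵥ y) := by
      rw [star_triv, star_triv, ← hSS, mul_assoc, hSB, ← mulVec_mulVec,
        dot_symm _ hSsym, ← mulVec_mulVec]
    rw [key]
    exact hB.dotProduct_mulVec_pos hSy

lemma pair_identity {A B : Matrix n n ℝ} (hA : A.PosDef) (hB : B.PosDef)
    (hAs : A.IsSymm) (hBs : B.IsSymm) (h : A * B = B * A) (a b : n → ℝ) :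
    (1/2) * (a ⬝ᵥ (B * A⁻¹) *ᵥ a) + (1/2) * (b ⬝ᵥ (A * B⁻¹) *ᵥ b) - a ⬝ᵥ b
      = (1/2) * ((A⁻¹ *ᵥ a - B⁻¹ *ᵥ b) ⬝ᵥ (A * B) *ᵥ (A⁻¹ *ᵥ a - B⁻¹ *ᵥ b)) := by
  have hAinv1 : A * A⁻¹ = 1 := mul_nonsing_inv _ hA.det_pos.ne'.isUnit
  have hAinv2 : A⁻¹ * A = 1 := nonsing_inv_mul _ hA.det_pos.ne'.isUnit
  have hBinv1 : B * B⁻¹ = 1 := mul_nonsing_inv _ hB.det_pos.ne'.isUnit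
  have hBinv2 : B⁻¹ * B = 1 := nonsing_inv_mul _ hB.det_pos.ne'.isUnit
  have hMs : (A * B).IsSymm := by
    rw [Matrix.IsSymm, transpose_mul, hAs, hBs, ← h]
  have hAis : A⁻¹.IsSymm := by rw [Matrix.IsSymm, transpose_nonsing_inv, hAs]
  have hBis : B⁻¹.IsSymm := by rw [Matrix.IsSymm, transpose_nonsing_inv, hBs]
  have hABinv : B⁻¹ * A = A * B⁻¹ := by
    calc B⁻¹ * A = B⁻¹ * A * (B * B⁻¹) := by rw [hBinv1, mul_one]
      _ = B⁻¹ * (A * B) * B⁻¹ := by noncomm_ring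
      _ = B⁻¹ * (B * A) * B⁻¹ := by rw [h]
      _ = (B⁻¹ * B) * (A * B⁻¹) := by noncomm_ring
      _ = A * B⁻¹ := by rw [hBinv2, one_mul]
  have m1 : A⁻¹ * (A * B) * A⁻¹ = B * A⁻¹ := by
    rw [← mul_assoc A⁻¹ A B, hAinv2, one_mul]
  have m2 : A⁻¹ * (A * B) * B⁻¹ = 1 := by
    rw [← mul_assoc A⁻¹ A B, hAinv2, one_mul, hBinv1]
  have m3 : B⁻¹ * (A * B) * A⁻¹ = 1 := by
    rw [h, ← mul_assoc B⁻¹ B A, hBinv2, one_mul, hAinv1]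
  have m4 : B⁻¹ * (A * B) * B⁻¹ = A * B⁻¹ := by
    rw [h, ← mul_assoc B⁻¹ B A, hBinv2, one_mul]
  have t1 : (A⁻¹ *ᵥ a) ⬝ᵥ (A * B) *ᵥ (A⁻¹ *ᵥ a) = a ⬝ᵥ (B * A⁻¹) *ᵥ a := by
    rw [← dot_symm _ hAis, mulVec_mulVec, mulVec_mulVec]
    first | rw [m1] | rw [mul_assoc, m1] | (congr 1; rw [mul_assoc]; rw [m1])
  have t2 : (A⁻¹ *ᵥ a) ⬝ᵥ (A * B) *ᵥ (B⁻¹ *ᵥ b) = a ⬝ᵥ b := by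
    rw [← dot_symm _ hAis, mulVec_mulVec, mulVec_mulVec]
    first | rw [m2, one_mulVec] | (congr 1; rw [show A⁻¹ * (A * B * B⁻¹) = A⁻¹ * (A * B) * B⁻¹ by rw [mul_assoc], m2, one_mulVec])
  have t3 : (B⁻¹ *ᵥ b) ⬝ᵥ (A * B) *ᵥ (A⁻¹ *ᵥ a) = a ⬝ᵥ b := by
    rw [← dot_symm _ hBis, mulVec_mulVec, mulVec_mulVec]
    first | rw [m3, one_mulVec, dotProduct_comm] | (rw [show B⁻¹ * (A * B * A⁻¹) = B⁻¹ * (A * B) * A⁻¹ by rw [mul_assoc], m3, one_mulVec, dotProduct_comm])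
  have t4 : (B⁻¹ *ᵥ b) ⬝ᵥ (A * B) *ᵥ (B⁻¹ *ᵥ b) = b ⬝ᵥ (A * B⁻¹) *ᵥ b := by
    rw [← dot_symm _ hBis, mulVec_mulVec, mulVec_mulVec]
    first | rw [m4] | rw [show B⁻¹ * (A * B * B⁻¹) = B⁻¹ * (A * B) * B⁻¹ by rw [mul_assoc], m4]
  rw [mulVec_sub, sub_dotProduct, dotProduct_sub, dotProduct_sub, t1, t2, t3, t4]
  ring

lemma sum_mulVec' {ι : Type*} (s : Finset ι) (M : ι → Matrix n n ℝ) (v : n → ℝ) :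
    (∑ k ∈ s, M k) *ᵥ v = ∑ k ∈ s, M k *ᵥ v :=
  map_sum (AddMonoidHom.mk' (fun W : Matrix n n ℝ => W *ᵥ v) (fun W Z => add_mulVec W Z v)) M s

lemma dot_sum' {ι : Type*} (s : Finset ι) (v : n → ℝ) (w : ι → n → ℝ) :
    v ⬝ᵥ (∑ k ∈ s, w k) = ∑ k ∈ s, v ⬝ᵥ w k :=
  map_sum (AddMonoidHom.mk' (fun z : n → ℝ => v ⬝ᵥ z) (fun a b => dotProduct_add v a b)) w s

lemma symmetrize {N : ℕ} (f : Fin N → Fin N → ℝ) :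
    ∑ i, ∑ k ∈ Finset.univ.erase i, f i k
      = ∑ i, ∑ j, if i < j then f i j + f j i else 0 := by
  have h1 : ∀ i : Fin N, ∑ k ∈ Finset.univ.erase i, f i k
      = ∑ k, ((if i < k then f i k else 0) + (if k < i then f i k else 0)) := by
    intro i
    rw [← Finset.filter_ne', Finset.sum_filter]
    refine Finset.sum_congr rfl fun k _ => ?_
    rcases lt_trichotomy i k with hik | rfl | hik
    · rw [if_pos hik.ne', if_pos hik, if_neg (asymm hik), add_zero]
    · simp
    · rw [if_pos hik.ne, if_neg (asymm hik), if_pos hik, zero_add]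
  simp_rw [h1, Finset.sum_add_distrib]
  have h2 : ∑ i : Fin N, ∑ k : Fin N, (if k < i then f i k else 0)
      = ∑ i : Fin N, ∑ k : Fin N, (if i < k then f k i else 0) := Finset.sum_comm
  rw [h2, ← Finset.sum_add_distrib]
  refine Finset.sum_congr rfl fun i _ => ?_
  rw [← Finset.sum_add_distrib]
  refine Finset.sum_congr rfl fun j _ => ?_
  split_ifs <;> simp

end Aux

/-- Quadratic `c`-splitting tuple for commuting positive definite matrices:
`∑_{i<j} ⟨x_i, x_j⟩ ≤ ∑_i ½⟨x_i, M_i x_i⟩` with `M_i = (∑_{k≠i} Q_k) Q_i⁻¹`,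
with equality iff `x_i = Q_i v` for some common `v`. -/
theorem quadratic_splitting {d N : ℕ} (hN : 2 ≤ N)
    (Q : Fin N → Matrix (Fin d) (Fin d) ℝ)
    (hsym : ∀ i, (Q i).IsSymm) (hpd : ∀ i, (Q i).PosDef)
    (hcomm : ∀ i j, Q i * Q j = Q j * Q i) :
    ∀ x : Fin N → (Fin d → ℝ),
      ((∑ i : Fin N, ∑ j : Fin N, if i < j then x i ⬝ᵥ x j else 0)
        ≤ ∑ i : Fin N,
            (1 / 2) * (x i ⬝ᵥ ((∑ k ∈ Finset.univ.erase i, Q k) * (Q i)⁻¹).mulVec (x i))) ∧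
      (((∑ i : Fin N, ∑ j : Fin N, if i < j then x i ⬝ᵥ x j else 0)
          = ∑ i : Fin N,
              (1 / 2) * (x i ⬝ᵥ ((∑ k ∈ Finset.univ.erase i, Q k) * (Q i)⁻¹).mulVec (x i)))
        ↔ ∃ v : Fin d → ℝ, ∀ i, x i = (Q i).mulVec v) := by
  intro x
  have hdet : ∀ i, IsUnit (Q i).det := fun i => (hpd i).det_pos.ne'.isUnit
  have hinv1 : ∀ i, Q i * (Q i)⁻¹ = 1 := fun i => mul_nonsing_inv _ (hdet i)
  set F : Fin N → Fin N → ℝ := fun i k => (1/2) * (x i ⬝ᵥ (Q k * (Q i)⁻¹) *ᵥ x i) with hF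
  set G : Fin N → Fin N → ℝ := fun i j =>
    (1/2) * (((Q i)⁻¹ *ᵥ x i - (Q j)⁻¹ *ᵥ x j) ⬝ᵥ (Q i * Q j) *ᵥ
      ((Q i)⁻¹ *ᵥ x i - (Q j)⁻¹ *ᵥ x j)) with hG
  have hRHS : (∑ i : Fin N,
        (1 / 2) * (x i ⬝ᵥ ((∑ k ∈ Finset.univ.erase i, Q k) * (Q i)⁻¹).mulVec (x i)))
      = ∑ i, ∑ j, if i < j then F i j + F j i else 0 := by
    rw [← symmetrize F]
    refine Finset.sum_congr rfl fun i _ => ?_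
    rw [Finset.sum_mul, sum_mulVec', dot_sum', Finset.mul_sum]
  have hpair : ∀ i j, F i j + F j i - x i ⬝ᵥ x j = G i j := fun i j => by
    simp only [hF, hG]
    exact pair_identity (hpd i) (hpd j) (hsym i) (hsym j) (hcomm i j) (x i) (x j)
  have hposG : ∀ i j, 0 ≤ G i j := fun i j => by
    have hPD := posDef_mul (hpd i) (hpd j) (hcomm i j)
    have h2 := hPD.posSemidef.dotProduct_mulVec_nonneg ((Q i)⁻¹ *ᵥ x i - (Q j)⁻¹ *ᵥ x j)
    rw [star_triv] at h2
    simp only [hG]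
    linarith
  have hGzero : ∀ i j, G i j = 0 → (Q i)⁻¹ *ᵥ x i = (Q j)⁻¹ *ᵥ x j := fun i j h0 => by
    by_contra hne
    have hPD := posDef_mul (hpd i) (hpd j) (hcomm i j)
    have h2 := hPD.dotProduct_mulVec_pos (sub_ne_zero.mpr hne)
    rw [star_triv] at h2
    simp only [hG] at h0
    linarith
  have main : (∑ i : Fin N, ∑ j : Fin N, if i < j then x i ⬝ᵥ x j else 0)
        + (∑ i : Fin N, ∑ j : Fin N, if i < j then G i j else 0)
      = ∑ i : Fin N,
        (1 / 2) * (x i ⬝ᵥ ((∑ k ∈ Finset.univ.erase i, Q k) * (Q i)⁻¹).mulVec (x i)) := by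
    rw [hRHS, ← Finset.sum_add_distrib]
    refine Finset.sum_congr rfl fun i _ => ?_
    rw [← Finset.sum_add_distrib]
    refine Finset.sum_congr rfl fun j _ => ?_
    split_ifs with hij
    · have := hpair i j; linarith
    · simp
  have hGsum_nonneg : 0 ≤ ∑ i : Fin N, ∑ j : Fin N, if i < j then G i j else 0 := by
    refine Finset.sum_nonneg fun i _ => Finset.sum_nonneg fun j _ => ?_
    split_ifs with hij
    · exact hposG i j
    · exact le_refl 0
  have hinv2 : ∀ i, (Q i)⁻¹ * Q i = 1 := fun i => nonsing_inv_mul _ (hdet i)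
  have hite : ∀ i j : Fin N, 0 ≤ (if i < j then G i j else 0) := fun i j => by
    split_ifs with h
    exacts [hposG i j, le_refl 0]
  constructor
  · linarith [hGsum_nonneg, main]
  constructor
  · intro heq
    have hz : (∑ i : Fin N, ∑ j : Fin N, if i < j then G i j else 0) = 0 := by
      linarith [main]
    have hall := (Finset.sum_eq_zero_iff_of_nonneg
      (fun i _ => Finset.sum_nonneg fun j _ => hite i j)).mp hz
    have hz2 : ∀ i j : Fin N, i < j → G i j = 0 := fun i j hij => by
      have h2 := (Finset.sum_eq_zero_iff_of_nonneg
        (fun j _ => hite i j)).mp (hall i (Finset.mem_univ i)) j (Finset.mem_univ j)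
      rwa [if_pos hij] at h2
    have heqv : ∀ i j : Fin N, (Q i)⁻¹ *ᵥ x i = (Q j)⁻¹ *ᵥ x j := by
      intro i j
      rcases lt_trichotomy i j with h | rfl | h
      · exact hGzero i j (hz2 i j h)
      · rfl
      · exact (hGzero j i (hz2 j i h)).symm
    refine ⟨(Q ⟨0, by omega⟩)⁻¹ *ᵥ x ⟨0, by omega⟩, fun i => ?_⟩
    show x i = Q i *ᵥ ((Q ⟨0, by omega⟩)⁻¹ *ᵥ x ⟨0, by omega⟩)
    rw [← heqv i ⟨0, by omega⟩, mulVec_mulVec, hinv1 i, one_mulVec]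
  · rintro ⟨v, hv⟩
    have hu : ∀ i : Fin N, (Q i)⁻¹ *ᵥ x i = v := fun i => by
      show (Q i)⁻¹ *ᵥ x i = v
      rw [hv i, mulVec_mulVec, hinv2 i, one_mulVec]
    have hGz : ∀ i j : Fin N, G i j = 0 := fun i j => by
      simp only [hG]
      rw [hu i, hu j, sub_self, zero_dotProduct, mul_zero]
    have hzz : (∑ i : Fin N, ∑ j : Fin N, if i < j then G i j else 0) = 0 := by
      refine Finset.sum_eq_zero fun i _ => Finset.sum_eq_zero fun j _ => ?_
      rw [hGz i j, ite_self]
    linarith [main]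
end
end

section
/- Let α₁,...,α_N : ℝ → ℝ be continuous, strictly increasing, surjective with α_i(0) = 0, and define f_i(x) = ∫₀^x Σ_{k≠i} α_k(α_i^{-1}(t)) dt. Then Σ_{1≤i<j≤N} x_i x_j ≤ Σ_{i=1}^N f_i(x_i) for all (x₁,...,x_N) ∈ ℝ^N, with equality if and only if there exists t ∈ ℝ with x_i = α_i(t) for all i. -/
open scoped BigOperators

noncomputable section

open intervalIntegral Function

lemma young_step (φ ψ : ℝ → ℝ) (hφc : Continuous φ) (hφm : StrictMono φ)
    (hψc : Continuous ψ) (hψm : Monotone ψ) (hlr : ∀ t, ψ (φ t) = t)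
    {u v : ℝ} (huv : u ≤ v) :
    |(((∫ t in (0:ℝ)..v, φ t) + ∫ t in (0:ℝ)..(φ v), ψ t) - v * φ v)
      - (((∫ t in (0:ℝ)..u, φ t) + ∫ t in (0:ℝ)..(φ u), ψ t) - u * φ u)|
      ≤ (v - u) * (φ v - φ u) := by
  have hφi : ∀ a b : ℝ, IntervalIntegrable φ MeasureTheory.volume a b :=
    fun a b => hφc.intervalIntegrable a b
  have hψi : ∀ a b : ℝ, IntervalIntegrable ψ MeasureTheory.volume a b :=
    fun a b => hψc.intervalIntegrable a b
  have e1 : (∫ t in (0:ℝ)..v, φ t) - ∫ t in (0:ℝ)..u, φ t = ∫ t in u..v, φ t :=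
    integral_interval_sub_left (hφi 0 v) (hφi 0 u)
  have e2 : (∫ t in (0:ℝ)..(φ v), ψ t) - ∫ t in (0:ℝ)..(φ u), ψ t
      = ∫ t in (φ u)..(φ v), ψ t :=
    integral_interval_sub_left (hψi 0 (φ v)) (hψi 0 (φ u))
  have hφuv : φ u ≤ φ v := hφm.monotone huv
  have b1 : (v - u) * φ u ≤ ∫ t in u..v, φ t := by
    have := integral_mono_on huv (_root_.intervalIntegrable_const (c := φ u)) (hφi u v)
      (fun x hx => hφm.monotone hx.1)
    simpa using this
  have b2 : (∫ t in u..v, φ t) ≤ (v - u) * φ v := by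
    have := integral_mono_on huv (hφi u v) (_root_.intervalIntegrable_const (c := φ v))
      (fun x hx => hφm.monotone hx.2)
    simpa using this
  have b3 : (φ v - φ u) * u ≤ ∫ t in (φ u)..(φ v), ψ t := by
    have := integral_mono_on hφuv (_root_.intervalIntegrable_const (c := u)) (hψi (φ u) (φ v))
      (fun x hx => by
        have := hψm hx.1
        rwa [hlr u] at this)
    simpa using this
  have b4 : (∫ t in (φ u)..(φ v), ψ t) ≤ (φ v - φ u) * v := by
    have := integral_mono_on hφuv (hψi (φ u) (φ v)) (_root_.intervalIntegrable_const (c := v))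
      (fun x hx => by
        have := hψm hx.2
        rwa [hlr v] at this)
    simpa using this
  rw [abs_le]
  constructor <;> nlinarith [e1, e2, b1, b2, b3, b4]

lemma young_identity (φ ψ : ℝ → ℝ) (hφc : Continuous φ) (hφm : StrictMono φ)
    (hψc : Continuous ψ) (hψm : Monotone ψ) (hlr : ∀ t, ψ (φ t) = t)
    (hφ0 : φ 0 = 0) (a : ℝ) :
    (∫ t in (0:ℝ)..a, φ t) + (∫ t in (0:ℝ)..(φ a), ψ t) = a * φ a := by
  set H : ℝ → ℝ := fun a => ((∫ t in (0:ℝ)..a, φ t) + ∫ t in (0:ℝ)..(φ a), ψ t) - a * φ a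
    with hH
  have key : ∀ u v : ℝ, u ≤ v → H u = H v := by
    intro u v huv
    have bound : ∀ n : ℕ, 0 < n → |H v - H u| ≤ (v - u) / n * (φ v - φ u) := by
      intro n hn
      set δ : ℝ := (v - u) / n with hδ
      have hδ0 : 0 ≤ δ := div_nonneg (by linarith) (Nat.cast_nonneg n)
      set T : ℕ → ℝ := fun k => u + k * δ with hT
      have hTle : ∀ k : ℕ, T k ≤ T (k + 1) := by
        intro k
        simp only [hT]
        push_cast
        nlinarith
      have hT0 : T 0 = u := by simp [hT]
      have hTn : T n = v := by
        simp only [hT, hδ]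
        field_simp
        ring
      have tel : H v - H u = ∑ k ∈ Finset.range n, (H (T (k + 1)) - H (T k)) := by
        rw [Finset.sum_range_sub (fun k => H (T k)), hT0, hTn]
      rw [tel]
      calc |∑ k ∈ Finset.range n, (H (T (k + 1)) - H (T k))|
          ≤ ∑ k ∈ Finset.range n, |H (T (k + 1)) - H (T k)| :=
            Finset.abs_sum_le_sum_abs _ _
        _ ≤ ∑ k ∈ Finset.range n, δ * (φ (T (k + 1)) - φ (T k)) := by
            refine Finset.sum_le_sum fun k _ => ?_
            have hstep := young_step φ ψ hφc hφm hψc hψm hlr (hTle k)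
            have hdiff : T (k + 1) - T k = δ := by
              simp only [hT]; push_cast; ring
            simpa [hH, hdiff] using hstep
        _ = δ * (φ v - φ u) := by
            rw [← Finset.mul_sum, Finset.sum_range_sub (fun k => φ (T k)), hT0, hTn]
    have hlim : Filter.Tendsto (fun n : ℕ => (v - u) / n * (φ v - φ u))
        Filter.atTop (nhds 0) := by
      have := Filter.Tendsto.mul_const (φ v - φ u)
        (tendsto_const_div_atTop_nhds_zero_nat (v - u))
      simpa using this
    have : |H v - H u| ≤ 0 := by
      refine ge_of_tendsto hlim ?_
      filter_upwards [Filter.eventually_gt_atTop 0] with n hn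
      exact bound n hn
    have h0 : H v - H u = 0 := abs_nonpos_iff.mp this
    linarith
  have hH0 : H 0 = 0 := by simp [hH, hφ0]
  have : H a = 0 := by
    rcases le_total 0 a with h | h
    · rw [← key 0 a h, hH0]
    · rw [key a 0 h, hH0]
  simpa [hH, sub_eq_zero] using this

lemma young_main (φ ψ : ℝ → ℝ) (hφc : Continuous φ) (hφm : StrictMono φ)
    (hψc : Continuous ψ) (hψm : Monotone ψ) (hlr : ∀ t, ψ (φ t) = t)
    (hrl : ∀ t, φ (ψ t) = t) (hφ0 : φ 0 = 0) (a b : ℝ) :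
    a * b ≤ (∫ t in (0:ℝ)..a, φ t) + (∫ t in (0:ℝ)..b, ψ t) ∧
    (a * b = (∫ t in (0:ℝ)..a, φ t) + (∫ t in (0:ℝ)..b, ψ t) ↔ b = φ a) := by
  set a₀ := ψ b with ha₀
  have hφa₀ : φ a₀ = b := hrl b
  have hid : (∫ t in (0:ℝ)..a₀, φ t) + (∫ t in (0:ℝ)..b, ψ t) = a₀ * b := by
    have := young_identity φ ψ hφc hφm hψc hψm hlr hφ0 a₀
    rwa [hφa₀] at this
  have hsub : (∫ t in (0:ℝ)..a, φ t) - ∫ t in (0:ℝ)..a₀, φ t = ∫ t in a₀..a, φ t :=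
    integral_interval_sub_left (hφc.intervalIntegrable 0 a) (hφc.intervalIntegrable 0 a₀)
  have hD : (∫ t in (0:ℝ)..a, φ t) + (∫ t in (0:ℝ)..b, ψ t) - a * b
      = ∫ t in a₀..a, (φ t - b) := by
    rw [integral_sub (hφc.intervalIntegrable a₀ a) (_root_.intervalIntegrable_const),
      integral_const, smul_eq_mul]
    linarith
  have hDpos : a ≠ a₀ → 0 < ∫ t in a₀..a, (φ t - b) := by
    intro hne
    rcases lt_or_gt_of_ne hne with h | h
    · have hpos : 0 < ∫ t in a..a₀, (b - φ t) := by
        refine intervalIntegral_pos_of_pos_on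
          ((continuous_const.sub hφc).intervalIntegrable a a₀) (fun t ht => ?_) h
        have h2 : φ t < φ a₀ := hφm ht.2
        rw [hφa₀] at h2; linarith
      have hswap : ∫ t in a₀..a, (φ t - b) = ∫ t in a..a₀, (b - φ t) := by
        rw [integral_symm, ← integral_neg]
        congr 1; funext t; ring
      rw [hswap]; exact hpos
    · refine intervalIntegral_pos_of_pos_on
        ((hφc.sub continuous_const).intervalIntegrable a₀ a) (fun t ht => ?_) h
      have h2 : φ a₀ < φ t := hφm ht.1
      rw [hφa₀] at h2; linarith
  constructor
  · rcases eq_or_ne a a₀ with h | h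
    · have : (∫ t in a₀..a, (φ t - b)) = 0 := by rw [h, integral_same]
      linarith
    · linarith [hDpos h]
  · constructor
    · intro heq
      by_contra hbne
      have hne : a ≠ a₀ := by
        intro h
        exact hbne (by rw [← hφa₀, h])
      have hD0 : (∫ t in a₀..a, (φ t - b)) = 0 := by linarith
      linarith [hDpos hne]
    · intro hb
      have haa : a = a₀ := by rw [ha₀, hb, hlr]
      have hz : (∫ t in a₀..a, (φ t - b)) = 0 := by rw [haa, integral_same]
      linarith


/-- One-dimensional nonlinear `c`-splitting along a monotone curve:
`∑_{i<j} x_i x_j ≤ ∑_i ∫₀^{x_i} ∑_{k≠i} α_k(α_i⁻¹(t)) dt`, with equality iff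
`x_i = α_i(t)` for some common `t`. -/
theorem curve_splitting {N : ℕ} (hN : 2 ≤ N) (α : Fin N → ℝ → ℝ)
    (hcont : ∀ i, Continuous (α i))
    (hmono : ∀ i, StrictMono (α i))
    (hsurj : ∀ i, Function.Surjective (α i))
    (h0 : ∀ i, α i 0 = 0) :
    ∀ x : Fin N → ℝ,
      ((∑ i : Fin N, ∑ j : Fin N, if i < j then x i * x j else 0)
        ≤ ∑ i : Fin N,
            ∫ t in (0:ℝ)..(x i),
              ∑ k ∈ Finset.univ.erase i, α k (Function.invFun (α i) t)) ∧
      (((∑ i : Fin N, ∑ j : Fin N, if i < j then x i * x j else 0)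
          = ∑ i : Fin N,
              ∫ t in (0:ℝ)..(x i),
                ∑ k ∈ Finset.univ.erase i, α k (Function.invFun (α i) t))
        ↔ ∃ t : ℝ, ∀ i, x i = α i t) := by
  intro x
  set ψ : Fin N → ℝ → ℝ := fun i => Function.invFun (α i) with hψdef
  have hri : ∀ i s, α i (ψ i s) = s := fun i s => Function.rightInverse_invFun (hsurj i) s
  have hli : ∀ i t, ψ i (α i t) = t := fun i t =>
    Function.leftInverse_invFun (hmono i).injective t
  have hψm : ∀ i, StrictMono (ψ i) := by
    intro i a b hab
    have h := (hmono i).lt_iff_lt (a := ψ i a) (b := ψ i b)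
    rw [hri, hri] at h
    exact h.mp hab
  have hψc : ∀ i, Continuous (ψ i) := by
    intro i
    have heq : ψ i = fun s =>
        ((hmono i).orderIsoOfSurjective (α i) (hsurj i)).symm s := by
      funext s
      apply (hmono i).injective
      rw [hri]
      have := ((hmono i).orderIsoOfSurjective (α i) (hsurj i)).apply_symm_apply s
      rw [StrictMono.coe_orderIsoOfSurjective] at this  -- may need adjusting
      exact this.symm
    rw [heq]
    exact OrderIso.continuous _
  have hψ0 : ∀ i, ψ i 0 = 0 := by
    intro i
    conv_lhs => rw [← h0 i]
    exact hli i 0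
  -- per-pair Young data
  set A : Fin N → Fin N → ℝ := fun i k => ∫ t in (0:ℝ)..(x i), α k (ψ i t) with hA
  have young : ∀ i j : Fin N, i ≠ j →
      (x i * x j ≤ A i j + A j i ∧ (x i * x j = A i j + A j i ↔ ψ j (x j) = ψ i (x i))) := by
    intro i j _
    have hm := young_main (fun t => α j (ψ i t)) (fun t => α i (ψ j t))
      ((hcont j).comp (hψc i)) ((hmono j).comp (hψm i))
      ((hcont i).comp (hψc j)) ((hmono i).comp (hψm j)).monotone
      (fun t => by beta_reduce; rw [hli j, hri i])
      (fun t => by beta_reduce; rw [hli i, hri j])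
      (by beta_reduce; rw [hψ0 i, h0 j])
      (x i) (x j)
    refine ⟨hm.1, hm.2.trans ?_⟩
    constructor
    · intro h
      rw [h, hli j]
    · intro h
      rw [← h, hri j]
  -- rewrite RHS
  have hRHS : (∑ i : Fin N, ∫ t in (0:ℝ)..(x i),
        ∑ k ∈ Finset.univ.erase i, α k (Function.invFun (α i) t))
      = ∑ i : Fin N, ∑ j : Fin N, if i < j then A i j + A j i else 0 := by
    have step1 : ∀ i : Fin N, (∫ t in (0:ℝ)..(x i),
          ∑ k ∈ Finset.univ.erase i, α k (Function.invFun (α i) t))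
        = ∑ k ∈ Finset.univ.erase i, A i k := by
      intro i
      exact intervalIntegral.integral_finset_sum
        (fun k _ => ((hcont k).comp (hψc i)).intervalIntegrable _ _)
    calc (∑ i : Fin N, ∫ t in (0:ℝ)..(x i),
          ∑ k ∈ Finset.univ.erase i, α k (Function.invFun (α i) t))
        = ∑ i : Fin N, ∑ k ∈ Finset.univ.erase i, A i k :=
          Finset.sum_congr rfl fun i _ => step1 i
      _ = ∑ i : Fin N, ((∑ k : Fin N, if i < k then A i k else 0)
            + ∑ k : Fin N, if k < i then A i k else 0) := by
          refine Finset.sum_congr rfl fun i _ => ?_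
          rw [← Finset.sum_add_distrib]
          rw [show Finset.univ.erase i = Finset.univ.filter (fun k => k ≠ i) from
            (Finset.filter_ne' _ _).symm, Finset.sum_filter]
          refine Finset.sum_congr rfl fun k _ => ?_
          rcases lt_trichotomy i k with h | h | h
          · simp [h, h.ne', asymm h, h.ne.symm]
          · simp [h, lt_irrefl]
          · simp [h, h.ne, asymm h]
      _ = (∑ i : Fin N, ∑ k : Fin N, if i < k then A i k else 0)
            + (∑ i : Fin N, ∑ k : Fin N, if k < i then A i k else 0) :=
          Finset.sum_add_distrib
      _ = (∑ i : Fin N, ∑ k : Fin N, if i < k then A i k else 0)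
            + (∑ i : Fin N, ∑ k : Fin N, if i < k then A k i else 0) := by
          have hcomm : (∑ i : Fin N, ∑ k : Fin N, if k < i then A i k else 0)
              = ∑ i : Fin N, ∑ k : Fin N, if i < k then A k i else 0 := Finset.sum_comm
          rw [hcomm]
      _ = ∑ i : Fin N, ∑ j : Fin N, if i < j then A i j + A j i else 0 := by
          rw [← Finset.sum_add_distrib]
          refine Finset.sum_congr rfl fun i _ => ?_
          rw [← Finset.sum_add_distrib]
          refine Finset.sum_congr rfl fun j _ => ?_
          by_cases h : i < j <;> simp [h]
  rw [hRHS]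
  -- convert double sums to sums over products
  rw [← Finset.sum_product' (f := fun i j => if i < j then x i * x j else 0),
    ← Finset.sum_product' (f := fun i j => if i < j then A i j + A j i else 0)]
  have hle : ∀ p ∈ (Finset.univ ×ˢ Finset.univ : Finset (Fin N × Fin N)),
      (if p.1 < p.2 then x p.1 * x p.2 else 0)
        ≤ (if p.1 < p.2 then A p.1 p.2 + A p.2 p.1 else 0) := by
    intro p _
    by_cases h : p.1 < p.2
    · simpa [h] using (young p.1 p.2 h.ne).1
    · simp [h]
  refine ⟨Finset.sum_le_sum hle, ?_⟩
  rw [Finset.sum_eq_sum_iff_of_le hle]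
  constructor
  · intro h
    have hpair : ∀ i j : Fin N, i < j → ψ i (x i) = ψ j (x j) := by
      intro i j hij
      have := h (i, j) (Finset.mem_product.mpr ⟨Finset.mem_univ _, Finset.mem_univ _⟩)
      simp only [hij, if_pos] at this
      exact ((young i j hij.ne).2.mp this).symm
    refine ⟨ψ ⟨0, by omega⟩ (x ⟨0, by omega⟩), fun i => ?_⟩
    have hall : ψ i (x i) = ψ ⟨0, by omega⟩ (x ⟨0, by omega⟩) := by
      rcases lt_trichotomy i ⟨0, by omega⟩ with h' | h' | h'
      · exact hpair i _ h'
      · rw [h']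
      · exact (hpair _ i h').symm
    rw [← hall, hri]
  · rintro ⟨t, ht⟩ p _
    by_cases h : p.1 < p.2
    · simp only [h, if_pos]
      refine (young p.1 p.2 h.ne).2.mpr ?_
      rw [ht p.1, ht p.2, hli, hli]
    · simp [h]
end
end

section
/- Let A: H ⇉ H be a maximally monotone relation and N ≥ 3. Define Γ = {(x₁, x₂, 0, ..., 0) ∈ H^N : (x₁,x₂) ∈ graph A}. Then Γ is maximally c-monotone for c(x₁,...,x_N) = Σ_{i<j}⟨x_i,x_j⟩: Γ is c-monotone, and any u ∈ H^N with Γ ∪ {u} c-monotone belongs to Γ. -/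
open scoped RealInnerProductSpace BigOperators

noncomputable section

variable {H : Type*} [NormedAddCommGroup H] [InnerProductSpace ℝ H] [CompleteSpace H]

/-- Sum of a function supported on two indices. -/
lemma sum_two_support {N : ℕ} (i0 i1 : Fin N) (h01 : i0 ≠ i1) (d : Fin N → H)
    (hd : ∀ j, j ≠ i0 → j ≠ i1 → d j = 0) (K : Finset (Fin N)) :
    ∑ j ∈ K, d j = (if i0 ∈ K then d i0 else 0) + (if i1 ∈ K then d i1 else 0) := by
  have hpt : ∀ j, d j = (if j = i0 then d i0 else 0) + (if j = i1 then d i1 else 0) := by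
    intro j
    by_cases h0 : j = i0
    · subst h0; simp [h01]
    · by_cases h1 : j = i1
      · subst h1; simp [h0]
      · simp [h0, h1, hd j h0 h1]
  calc ∑ j ∈ K, d j
      = ∑ j ∈ K, ((if j = i0 then d i0 else 0) + (if j = i1 then d i1 else 0)) :=
        Finset.sum_congr rfl fun j _ => hpt j
    _ = _ := by
        rw [Finset.sum_add_distrib, Finset.sum_ite_eq' K i0 (fun _ => d i0),
          Finset.sum_ite_eq' K i1 (fun _ => d i1)]

lemma inner_expand (t : ℝ) (u v e : H) :
    ⟪u + t • e, v + t • e⟫ = ⟪u, v⟫ + t * ⟪u, e⟫ + t * ⟪e, v⟫ + t ^ 2 * ‖e‖ ^ 2 := by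
  simp only [inner_add_left, inner_add_right, real_inner_smul_left, real_inner_smul_right]
  rw [real_inner_self_eq_norm_sq]
  ring

/-- A maximally monotone relation is not contained in any half-space in the
`(a, b) ↦ a + b` direction. -/
lemma maxmono_dual_cone {A : Set (H × H)} (hA : MaxMonoRel A) {e : H} {β : ℝ}
    (h : ∀ p ∈ A, ⟪p.1 + p.2, e⟫ ≤ β) : e = 0 := by
  by_contra he
  have hA_ne : A.Nonempty := by
    by_contra hemp
    rw [Set.not_nonempty_iff_eq_empty] at hemp
    have : ((0 : H), (0 : H)) ∈ A := hA.2 (0, 0) (fun q hq => by simp [hemp] at hq)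
    simp [hemp] at this
  obtain ⟨⟨x, y⟩, hxy⟩ := hA_ne
  have hne : (0 : ℝ) < ‖e‖ ^ 2 := by
    have : (0:ℝ) < ‖e‖ := norm_pos_iff.mpr he
    positivity
  set c : ℝ := ⟪x + y, e⟫ with hc
  set t : ℝ := max 0 ((β - c) / ‖e‖ ^ 2) + 1 with ht
  have ht0 : 0 < t := by
    have := le_max_left 0 ((β - c) / ‖e‖ ^ 2); simp only [ht]; linarith
  have htβ : β - c ≤ t * ‖e‖ ^ 2 - ‖e‖ ^ 2 := by
    have h1 : (β - c) / ‖e‖ ^ 2 ≤ t - 1 := by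
      simp only [ht, add_sub_cancel_right]; exact le_max_right _ _
    have h2 : β - c ≤ (t - 1) * ‖e‖ ^ 2 := (div_le_iff₀ hne).mp h1
    nlinarith
  have expand := fun u v : H => inner_expand t u v e
  have hq : (x + t • e, y + t • e) ∈ A := by
    apply hA.2
    intro q hq
    have hmono := hA.1 (x, y) hxy q hq
    have hb := h q hq
    simp only at hmono hb ⊢
    have e1 : x + t • e - q.1 = (x - q.1) + t • e := by abel
    have e2 : y + t • e - q.2 = (y - q.2) + t • e := by abel
    rw [e1, e2, expand]
    have hs1 : ⟪x - q.1, e⟫ = ⟪x, e⟫ - ⟪q.1, e⟫ := inner_sub_left _ _ _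
    have hs2 : ⟪e, y - q.2⟫ = ⟪y, e⟫ - ⟪q.2, e⟫ := by
      rw [real_inner_comm]; exact inner_sub_left _ _ _
    have hsum : ⟪q.1 + q.2, e⟫ = ⟪q.1, e⟫ + ⟪q.2, e⟫ := inner_add_left _ _ _
    have hcs : c = ⟪x, e⟫ + ⟪y, e⟫ := by rw [hc]; exact inner_add_left _ _ _
    nlinarith [mul_le_mul_of_nonneg_left htβ ht0.le]
  have hfin := h _ hq
  simp only at hfin
  have expand2 : ⟪x + t • e + (y + t • e), e⟫ = c + 2 * t * ‖e‖ ^ 2 := by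
    simp [hc, inner_add_left, real_inner_smul_left, real_inner_self_eq_norm_sq]
    ring
  rw [expand2] at hfin
  nlinarith [mul_pos ht0 hne]

lemma gamma_cmono {N : ℕ} (A : Set (H × H)) (hA : MonoRel A) (i0 i1 : Fin N) (h01 : i0 ≠ i1) :
    CMono {x : Fin N → H | (x i0, x i1) ∈ A ∧ ∀ i, i ≠ i0 → i ≠ i1 → x i = 0} := by
  intro u hu v hv K _ _
  obtain ⟨huA, hu0⟩ := hu
  obtain ⟨hvA, hv0⟩ := hv
  have hd : ∀ j, j ≠ i0 → j ≠ i1 → u j - v j = 0 := fun j h0 h1 => by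
    rw [hu0 j h0 h1, hv0 j h0 h1, sub_zero]
  have hmono : (0:ℝ) ≤ ⟪u i0 - v i0, u i1 - v i1⟫ := hA _ huA _ hvA
  rw [sum_two_support i0 i1 h01 _ hd K, sum_two_support i0 i1 h01 _ hd Kᶜ]
  by_cases h0 : i0 ∈ K <;> by_cases h1 : i1 ∈ K <;>
      simp [Finset.mem_compl, h0, h1]
  · exact hmono
  · rw [real_inner_comm]; exact hmono

lemma gamma_max {N : ℕ} (A : Set (H × H)) (hA : MaxMonoRel A) (i0 i1 : Fin N) (h01 : i0 ≠ i1)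
    (u : Fin N → H)
    (hc : CMono ({x : Fin N → H | (x i0, x i1) ∈ A ∧ ∀ i, i ≠ i0 → i ≠ i1 → x i = 0} ∪ {u})) :
    (u i0, u i1) ∈ A ∧ ∀ i, i ≠ i0 → i ≠ i1 → u i = 0 := by
  set Γ : Set (Fin N → H) :=
    {x : Fin N → H | (x i0, x i1) ∈ A ∧ ∀ i, i ≠ i0 → i ≠ i1 → x i = 0} with hΓ
  have hvmem : ∀ a b : H, (a, b) ∈ A →
      (fun j => if j = i0 then a else if j = i1 then b else 0) ∈ Γ := by
    intro a b hab
    refine ⟨?_, fun i h0 h1 => by simp [h0, h1]⟩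
    simp [h01.symm]
    exact hab
  have hvd : ∀ a b : H, ∀ j, j ≠ i0 → j ≠ i1 →
      (fun j => if j = i0 then a else if j = i1 then b else 0) j = 0 := by
    intro a b j h0 h1; simp [h0, h1]
  have hu0 : ∀ i, i ≠ i0 → i ≠ i1 → u i = 0 := by
    intro i hi0 hi1
    apply maxmono_dual_cone hA (β := ⟪∑ j ∈ ({i}ᶜ : Finset (Fin N)), u j, u i⟫)
    intro p hp
    set v : Fin N → H := fun j => if j = i0 then p.1 else if j = i1 then p.2 else 0 with hv
    have hvm : v ∈ Γ := hvmem p.1 p.2 hp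
    have hKne : ({i} : Finset (Fin N)).Nonempty := ⟨i, Finset.mem_singleton_self i⟩
    have hKuniv : ({i} : Finset (Fin N)) ≠ Finset.univ := by
      intro hK
      have : i0 ∈ ({i} : Finset (Fin N)) := hK ▸ Finset.mem_univ i0
      exact hi0 (Finset.mem_singleton.mp this).symm
    have h := hc u (Or.inr rfl) v (Or.inl hvm) {i} hKne hKuniv
    have hsum1 : ∑ j ∈ ({i} : Finset (Fin N)), (u j - v j) = u i := by
      simp [hv, hi0, hi1]
    have hsum2 : ∑ j ∈ ({i}ᶜ : Finset (Fin N)), (u j - v j) =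
        (∑ j ∈ ({i}ᶜ : Finset (Fin N)), u j) - (p.1 + p.2) := by
      rw [Finset.sum_sub_distrib]
      congr 1
      rw [sum_two_support i0 i1 h01 v (hvd p.1 p.2)]
      have m0 : i0 ∈ ({i}ᶜ : Finset (Fin N)) := by
        simp [Finset.mem_compl]; exact fun hh => hi0 hh.symm
      have m1 : i1 ∈ ({i}ᶜ : Finset (Fin N)) := by
        simp [Finset.mem_compl]; exact fun hh => hi1 hh.symm
      simp [hv, m0, m1, h01.symm]
    rw [hsum1, hsum2] at h
    have hx : ⟪u i, (∑ j ∈ ({i}ᶜ : Finset (Fin N)), u j) - (p.1 + p.2)⟫ =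
        ⟪u i, ∑ j ∈ ({i}ᶜ : Finset (Fin N)), u j⟫ - ⟪u i, p.1 + p.2⟫ :=
      inner_sub_right _ _ _
    rw [hx] at h
    rw [real_inner_comm (p.1 + p.2) (u i), real_inner_comm _ (u i)] at *
    linarith
  refine ⟨?_, hu0⟩
  apply hA.2 (u i0, u i1)
  intro q hq
  set v : Fin N → H := fun j => if j = i0 then q.1 else if j = i1 then q.2 else 0 with hv
  have hvm : v ∈ Γ := hvmem q.1 q.2 hq
  have hKne : ({i0} : Finset (Fin N)).Nonempty := ⟨i0, Finset.mem_singleton_self i0⟩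
  have hKuniv : ({i0} : Finset (Fin N)) ≠ Finset.univ := by
    intro hK
    have : i1 ∈ ({i0} : Finset (Fin N)) := hK ▸ Finset.mem_univ i1
    exact h01 (Finset.mem_singleton.mp this).symm
  have h := hc u (Or.inr rfl) v (Or.inl hvm) {i0} hKne hKuniv
  have hd : ∀ j, j ≠ i0 → j ≠ i1 → u j - v j = 0 := by
    intro j hj0 hj1
    simp [hv, hj0, hj1, hu0 j hj0 hj1]
  have hsum1 : ∑ j ∈ ({i0} : Finset (Fin N)), (u j - v j) = u i0 - q.1 := by
    simp [hv]
  have hsum2 : ∑ j ∈ ({i0}ᶜ : Finset (Fin N)), (u j - v j) = u i1 - q.2 := by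
    rw [sum_two_support i0 i1 h01 _ hd]
    have m0 : i0 ∉ ({i0}ᶜ : Finset (Fin N)) := by simp
    have m1 : i1 ∈ ({i0}ᶜ : Finset (Fin N)) := by
      simp [Finset.mem_compl]; exact fun hh => h01 hh.symm
    simp [m0, m1, hv, h01.symm]
  rw [hsum1, hsum2] at h
  exact h

/-- The trivial embedding of a maximally monotone relation into the multi-marginal
setting is maximally `c`-monotone. -/
theorem trivial_embedding_max_c_monotone {N : ℕ} (hN : 3 ≤ N) (A : Set (H × H))
    (hA : MaxMonoRel A) :
    CMono {x : Fin N → H |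
        (x ⟨0, by omega⟩, x ⟨1, by omega⟩) ∈ A ∧
        ∀ i : Fin N, i ≠ ⟨0, by omega⟩ → i ≠ ⟨1, by omega⟩ → x i = 0} ∧
    ∀ u : Fin N → H,
      CMono ({x : Fin N → H |
          (x ⟨0, by omega⟩, x ⟨1, by omega⟩) ∈ A ∧
          ∀ i : Fin N, i ≠ ⟨0, by omega⟩ → i ≠ ⟨1, by omega⟩ → x i = 0} ∪ {u}) →
      u ∈ {x : Fin N → H |
          (x ⟨0, by omega⟩, x ⟨1, by omega⟩) ∈ A ∧
          ∀ i : Fin N, i ≠ ⟨0, by omega⟩ → i ≠ ⟨1, by omega⟩ → x i = 0} := by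
  have h01 : (⟨0, by omega⟩ : Fin N) ≠ ⟨1, by omega⟩ :=
    Fin.ne_of_val_ne (by norm_num)
  exact ⟨gamma_cmono A hA.1 _ _ h01, fun u hc => gamma_max A hA _ _ h01 u hc⟩
end
end

section
/- Let Γ ⊆ H^N be n-c-cyclically monotone for the cost c(x₁,...,x_N) = Σ_{i<j}⟨x_i,x_j⟩. Then for each index i₀, the relation A_{i₀} = {(x_{i₀}, Σ_{i≠i₀} x_i) : x ∈ Γ} ⊆ H × H is n-cyclically monotone. -/
open scoped RealInnerProductSpace BigOperators

noncomputable section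

variable {H : Type*} [NormedAddCommGroup H] [InnerProductSpace ℝ H] [CompleteSpace H]

lemma cost_split {N : ℕ} (i₀ : Fin N) (x : Fin N → H) :
    cost x = (∑ i ∈ Finset.univ.erase i₀, ∑ j ∈ Finset.univ.erase i₀,
        if i < j then ⟪x i, x j⟫ else 0)
      + ⟪x i₀, ∑ i ∈ Finset.univ.erase i₀, x i⟫ := by
  classical
  have hins : (Finset.univ : Finset (Fin N)) = insert i₀ (Finset.univ.erase i₀) :=
    (Finset.insert_erase (Finset.mem_univ i₀)).symm
  unfold cost
  rw [inner_sum]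
  conv_lhs => rw [hins]
  simp only [Finset.sum_insert (Finset.notMem_erase i₀ _), if_neg (lt_irrefl i₀)]
  rw [Finset.sum_add_distrib, zero_add]
  have : (∑ j ∈ Finset.univ.erase i₀, if i₀ < j then ⟪x i₀, x j⟫ else 0)
      + ∑ i ∈ Finset.univ.erase i₀, (if i < i₀ then ⟪x i, x i₀⟫ else 0)
      = ∑ i ∈ Finset.univ.erase i₀, ⟪x i₀, x i⟫ := by
    rw [← Finset.sum_add_distrib]
    apply Finset.sum_congr rfl
    intro i hi
    have hne : i ≠ i₀ := Finset.ne_of_mem_erase hi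
    rcases lt_or_gt_of_ne hne with h | h
    · rw [if_neg (not_lt_of_gt h), if_pos h, zero_add, real_inner_comm]
    · rw [if_pos h, if_neg (not_lt_of_gt h), add_zero]
  linarith [this]

/-- If `Γ` is `n`-`c`-cyclically monotone, then for each index `i₀` the relation
`A_{i₀} = {(x_{i₀}, ∑_{i≠i₀} x_i) : x ∈ Γ}` is `n`-cyclically monotone. -/
theorem AK_n_cyclically_monotone {N n : ℕ} (hN : 2 ≤ N) (hn : 2 ≤ n)
    (Γ : Set (Fin N → H))
    (hΓ : ∀ x : Fin n → (Fin N → H), (∀ j, x j ∈ Γ) →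
      ∀ σ : Fin N → Equiv.Perm (Fin n),
        ∑ j : Fin n, cost (fun i => x (σ i j) i) ≤ ∑ j : Fin n, cost (x j))
    (i₀ : Fin N) :
    ∀ x : Fin n → (Fin N → H), (∀ j, x j ∈ Γ) →
      ∀ σ : Equiv.Perm (Fin n),
        ∑ j : Fin n, ⟪x j i₀, ∑ i ∈ Finset.univ.erase i₀, x (σ j) i⟫
          ≤ ∑ j : Fin n, ⟪x j i₀, ∑ i ∈ Finset.univ.erase i₀, x j i⟫ := by
  classical
  intro x hx σ
  set E := Finset.univ.erase i₀ with hE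
  set S : Fin n → H := fun j => ∑ i ∈ E, x j i with hS
  set R : Fin n → ℝ := fun j =>
    ∑ i ∈ E, ∑ k ∈ E, if i < k then ⟪x j i, x j k⟫ else 0 with hR
  set σs : Fin N → Equiv.Perm (Fin n) := fun i => if i = i₀ then σ⁻¹ else 1 with hσs
  have key := hΓ x hx σs
  have hxcost : ∀ j, cost (x j) = R j + ⟪x j i₀, S j⟫ := fun j => cost_split i₀ (x j)
  have hycost : ∀ j, cost (fun i => x (σs i j) i) = R j + ⟪x (σ⁻¹ j) i₀, S j⟫ := by
    intro j
    rw [cost_split i₀]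
    congr 1
    · apply Finset.sum_congr rfl
      intro i hi
      apply Finset.sum_congr rfl
      intro k hk
      have hi' : i ≠ i₀ := Finset.ne_of_mem_erase hi
      have hk' : k ≠ i₀ := Finset.ne_of_mem_erase hk
      simp [hσs, hi', hk']
    · have h1 : x (σs i₀ j) i₀ = x (σ⁻¹ j) i₀ := by simp [hσs]
      rw [h1]
      congr 1
      apply Finset.sum_congr rfl
      intro i hi
      have hi' : i ≠ i₀ := Finset.ne_of_mem_erase hi
      simp [hσs, hi']
  rw [Finset.sum_congr rfl (fun j _ => hycost j),
      Finset.sum_congr rfl (fun j _ => hxcost j),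
      Finset.sum_add_distrib, Finset.sum_add_distrib, add_le_add_iff_left] at key
  calc ∑ j : Fin n, ⟪x j i₀, ∑ i ∈ E, x (σ j) i⟫
      = ∑ j : Fin n, ⟪x (σ⁻¹ j) i₀, S j⟫ := by
        apply Fintype.sum_equiv σ
        intro j
        simp [hS]
    _ ≤ ∑ j : Fin n, ⟪x j i₀, S j⟫ := key
end
end
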